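/- arXiv:1211.2687 — 5 statements merged into one kernel-verified Lean document; each statement's English description precedes it below -/
import Mathlib

section
/- Under the PD-quad algorithm run with the constant parameter ε(t) = B²/√(2n) for all t, for every item-size distribution F and every n ≥ 1, the expected waste after packing n items satisfies E[W^{PD-quad}(n)] ≤ E[W^{OPT}(n)] + √(2·B⁴·n), where the expectation is over the i.i.d. item sequence. -/
/-- Update of the level counts when an item of size `sz` is placed at level `h`
(with `h = 0` meaning a fresh empty bin): the count of level `h + sz` increases by one,
and if `h ≥ 1` and the count of level `h` is positive it decreases by one (if `h ≥ 1`
and no level-`h` bin exists, a new bin with a forbidden hole of size `h` at its bottom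
is opened, which coincides with truncated subtraction on `ℕ`). -/
def binUpdate (N : ℕ → ℕ) (h sz : ℕ) : ℕ → ℕ := fun h' =>
  (if h' = h ∧ 1 ≤ h then N h' - 1 else N h') + if h' = h + sz then 1 else 0

/-- `binState sz place t h` is the number of bins of level `h` after the first `t` items
have been packed, where the `t`-th item (`0`-indexed) has size `sz t` and is placed at
level `place t`; initially there are no bins. -/
def binState (sz place : ℕ → ℕ) : ℕ → ℕ → ℕ
  | 0 => fun _ => 0
  | t + 1 => binUpdate (binState sz place t) (place t) (sz t)

/-- The quantity minimized by the PD-quad algorithm when an item of size `sz` is placed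
at level `h`: `B·1{h = B−sz} − sz + (ε/2)·∑_{h'=1}^{B−1} N_{h'}²`, evaluated at the
level counts *after* the placement. -/
noncomputable def quadObj (B : ℕ) (ε : ℝ) (N : ℕ → ℕ) (sz h : ℕ) : ℝ :=
  (B : ℝ) * (if h = B - sz then 1 else 0) - (sz : ℝ) +
    ε / 2 * ∑ h' ∈ Finset.Icc 1 (B - 1), ((binUpdate N h sz h' : ℕ) : ℝ) ^ 2

/-- One step of the PD-quad algorithm with parameter `ε`: given current level counts
`N`, an item of size `sz` is placed at a level `h ∈ {0, 1, …, B − sz}` minimizing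
`quadObj` (ties broken arbitrarily). -/
def PDQuadStep (B : ℕ) (ε : ℝ) (N : ℕ → ℕ) (sz h : ℕ) : Prop :=
  h ≤ B - sz ∧ ∀ h' ≤ B - sz, quadObj B ε N sz h ≤ quadObj B ε N sz h'

/-- The quantity minimized by the PD-exp algorithm when an item of size `sz` is placed
at level `h`: `B·1{h = 0} − sz + (B/ε)·∑_{h'=1}^{B−1} exp(−ε·N_{h'})`, evaluated at the
level counts *after* the placement. -/
noncomputable def expObj (B : ℕ) (ε : ℝ) (N : ℕ → ℕ) (sz h : ℕ) : ℝ :=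
  (B : ℝ) * (if h = 0 then 1 else 0) - (sz : ℝ) +
    (B : ℝ) / ε * ∑ h' ∈ Finset.Icc 1 (B - 1),
      Real.exp (-ε * ((binUpdate N h sz h' : ℕ) : ℝ))

/-- Feasible placement levels for PD-exp: a fresh bin (`h = 0`), or an existing
partially filled bin of level `h ∈ {1, …, B − sz}` with `N h > 0`. -/
def expFeasible (B : ℕ) (N : ℕ → ℕ) (sz h : ℕ) : Prop :=
  h = 0 ∨ (1 ≤ h ∧ h ≤ B - sz ∧ 0 < N h)

/-- One step of the PD-exp algorithm with parameter `ε`: given current level counts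
`N`, an item of size `sz` is placed at a feasible level `h` minimizing `expObj`
(ties broken arbitrarily). -/
def PDExpStep (B : ℕ) (ε : ℝ) (N : ℕ → ℕ) (sz h : ℕ) : Prop :=
  expFeasible B N sz h ∧
    ∀ h', expFeasible B N sz h' → expObj B ε N sz h ≤ expObj B ε N sz h'

/-- The waste of the online algorithm after `n` items:
`B · (number of non-empty bins) − (total size of the n items)`; every non-empty bin has
a level in `{1, …, B}`. -/
noncomputable def algWaste (B n : ℕ) (sz place : ℕ → ℕ) : ℝ :=
  (B : ℝ) * ∑ h ∈ Finset.Icc 1 B, (binState sz place n h : ℝ) -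
    ∑ t ∈ Finset.range n, (sz t : ℝ)

/-- `optWaste B n sz` is the minimum possible waste
`B · (number of non-empty bins) − (total size)` over all offline packings of the `n`
items of sizes `sz 0, …, sz (n-1)` into bins of capacity `B` (at most `n` bins are
ever needed, so bins are indexed by `Fin n`). -/
noncomputable def optWaste (B n : ℕ) (sz : ℕ → ℕ) : ℕ :=
  sInf { w : ℕ | ∃ f : Fin n → Fin n,
    (∀ b : Fin n, ∑ i ∈ Finset.univ.filter (fun i => f i = b), sz i ≤ B) ∧
    w + ∑ i : Fin n, sz i = B * (Finset.univ.image f).card }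

/-- The sequence of item sizes determined by the type sequence `σ`:
the `t`-th item (`0`-indexed, `t < n`) has type `σ t` and size `s (σ t)`. -/
def seqSizes {J : ℕ} (n : ℕ) (s : Fin J → ℕ) (σ : Fin n → Fin J) : ℕ → ℕ :=
  fun t => if h : t < n then s (σ ⟨t, h⟩) else 0


open Finset in
/-- The quadratic potential `ε/2 · ∑_{h=1}^{B-1} N_h²`. -/
noncomputable def pdPhi (B : ℕ) (ε : ℝ) (N : ℕ → ℕ) : ℝ :=
  ε / 2 * ∑ h' ∈ Finset.Icc 1 (B - 1), ((N h' : ℕ) : ℝ) ^ 2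

/-- Linearized amortized cost of placing an item of size `sz` at level `h`. -/
noncomputable def pdLin (B : ℕ) (ε : ℝ) (N : ℕ → ℕ) (sz h : ℕ) : ℝ :=
  (B : ℝ) * (if h = B - sz then 1 else 0) - (sz : ℝ) +
    ε * ((if h + sz ≤ B - 1 then (N (h + sz) : ℝ) else 0) -
         (if 1 ≤ h then (N h : ℝ) else 0))

/-- Dual price of an item of size `sz` at state `N`. -/
noncomputable def pdY (B : ℕ) (ε : ℝ) (N : ℕ → ℕ) (sz : ℕ) : ℝ :=
  (Finset.range (B - sz + 1)).inf' (by simp) (pdLin B ε N sz)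

lemma quadObj_eq (B : ℕ) (ε : ℝ) (N : ℕ → ℕ) (sz h : ℕ) :
    quadObj B ε N sz h =
      (B : ℝ) * (if h = B - sz then 1 else 0) - (sz : ℝ) + pdPhi B ε (binUpdate N h sz) := rfl

lemma pdPhi_update_le (B : ℕ) (ε : ℝ) (hε : 0 ≤ ε) (N : ℕ → ℕ) (sz h : ℕ)
    (hsz : 1 ≤ sz) (hhB : h + sz ≤ B) :
    pdPhi B ε (binUpdate N h sz) ≤ pdPhi B ε N +
      ε * ((if h + sz ≤ B - 1 then (N (h + sz) : ℝ) else 0) -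
           (if 1 ≤ h then (N h : ℝ) else 0)) + ε := by
  set A : ℝ := if h + sz ≤ B - 1 then (N (h + sz) : ℝ) else 0 with hA
  set C : ℝ := if 1 ≤ h then (N h : ℝ) else 0 with hC
  have key : ∑ h' ∈ Finset.Icc 1 (B - 1), ((binUpdate N h sz h' : ℕ) : ℝ) ^ 2
      ≤ (∑ h' ∈ Finset.Icc 1 (B - 1), ((N h' : ℕ) : ℝ) ^ 2) + ((2 * A + 1) + (1 - 2 * C)) := by
    have pointwise : ∀ h' ∈ Finset.Icc 1 (B - 1),
        ((binUpdate N h sz h' : ℕ) : ℝ) ^ 2 ≤ ((N h' : ℝ) ^ 2 +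
          ((2 * (N h' : ℝ) + 1) * (if h' = h + sz then 1 else 0) +
          (1 - 2 * (N h' : ℝ)) * (if h' = h ∧ 1 ≤ h then 1 else 0))) := by
      intro h' _
      unfold binUpdate
      by_cases h1 : h' = h + sz
      · subst h1
        have h2 : ¬ (h + sz = h ∧ 1 ≤ h) := by omega
        rw [if_neg h2, if_neg h2]
        push_cast
        norm_num
        nlinarith [sq_nonneg ((N (h + sz) : ℝ))]
      · by_cases h2 : h' = h ∧ 1 ≤ h
        · rw [if_pos h2, if_neg h1, if_pos h2, if_neg h1]
          rcases Nat.eq_zero_or_pos (N h') with h0 | h0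
          · simp [h0]
          · rw [Nat.add_zero, Nat.cast_pred h0]
            nlinarith []
        · rw [if_neg h1, if_neg h2, if_neg h1, if_neg h2]
          push_cast
          nlinarith []
    have hsum := Finset.sum_le_sum pointwise
    rw [Finset.sum_add_distrib, Finset.sum_add_distrib] at hsum
    have e1 : ∑ h' ∈ Finset.Icc 1 (B - 1),
        (2 * (N h' : ℝ) + 1) * (if h' = h + sz then 1 else 0) ≤ 2 * A + 1 := by
      have : ∀ h' ∈ Finset.Icc 1 (B-1), (2 * (N h' : ℝ) + 1) * (if h' = h + sz then 1 else 0)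
          = if h' = h + sz then (2 * (N h' : ℝ) + 1) else 0 := by
        intro h' _; split <;> simp
      rw [Finset.sum_congr rfl this, Finset.sum_ite_eq']
      split
      · rename_i hmem
        have : h + sz ≤ B - 1 := (Finset.mem_Icc.1 hmem).2
        rw [hA, if_pos this]
      · have : 0 ≤ A := by rw [hA]; split <;> positivity
        linarith
    have e2 : ∑ h' ∈ Finset.Icc 1 (B - 1),
        (1 - 2 * (N h' : ℝ)) * (if h' = h ∧ 1 ≤ h then 1 else 0) ≤ 1 - 2 * C := by
      by_cases hh : 1 ≤ h
      · have hcongr : ∀ h' ∈ Finset.Icc 1 (B-1), (1 - 2 * (N h' : ℝ)) * (if h' = h ∧ 1 ≤ h then 1 else 0)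
            = if h' = h then (1 - 2 * (N h' : ℝ)) else 0 := by
          intro h' _
          by_cases h3 : h' = h
          · rw [if_pos ⟨h3, hh⟩, if_pos h3, mul_one]
          · rw [if_neg (by tauto), if_neg h3, mul_zero]
        rw [Finset.sum_congr rfl hcongr, Finset.sum_ite_eq']
        have hmem : h ∈ Finset.Icc 1 (B-1) := Finset.mem_Icc.2 ⟨hh, by omega⟩
        rw [if_pos hmem, hC, if_pos hh]
      · have hcongr : ∀ h' ∈ Finset.Icc 1 (B-1), (1 - 2 * (N h' : ℝ)) * (if h' = h ∧ 1 ≤ h then 1 else 0)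
            = 0 := by
          intro h' _; rw [if_neg (by tauto), mul_zero]
        rw [Finset.sum_congr rfl hcongr, Finset.sum_const, smul_zero, hC, if_neg hh]
        norm_num
    linarith
  unfold pdPhi
  have h2 : ε / 2 * ∑ h' ∈ Finset.Icc 1 (B - 1), ((binUpdate N h sz h' : ℕ) : ℝ) ^ 2
      ≤ ε / 2 * ((∑ h' ∈ Finset.Icc 1 (B - 1), ((N h' : ℕ) : ℝ) ^ 2) + ((2 * A + 1) + (1 - 2 * C))) :=
    mul_le_mul_of_nonneg_left key (by linarith)
  calc ε / 2 * ∑ h' ∈ Finset.Icc 1 (B - 1), ((binUpdate N h sz h' : ℕ) : ℝ) ^ 2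
      ≤ ε / 2 * ((∑ h' ∈ Finset.Icc 1 (B - 1), ((N h' : ℕ) : ℝ) ^ 2) + ((2 * A + 1) + (1 - 2 * C))) := h2
    _ = ε / 2 * (∑ h' ∈ Finset.Icc 1 (B - 1), ((N h' : ℕ) : ℝ) ^ 2) + ε * (A - C) + ε := by ring
lemma pdY_le (B : ℕ) (ε : ℝ) (N : ℕ → ℕ) (sz h : ℕ) (hh : h ≤ B - sz) :
    pdY B ε N sz ≤ pdLin B ε N sz h :=
  Finset.inf'_le _ (Finset.mem_range.2 (by omega))

lemma pd_step (B : ℕ) (ε : ℝ) (hε : 0 ≤ ε) (N : ℕ → ℕ) (sz h : ℕ)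
    (hsz : 1 ≤ sz) (hszB : sz ≤ B) (hstep : PDQuadStep B ε N sz h) :
    (B : ℝ) * (if h = B - sz then 1 else 0) - (sz : ℝ) + pdPhi B ε (binUpdate N h sz)
      ≤ pdY B ε N sz + ε + pdPhi B ε N := by
  obtain ⟨h₀, hh₀, hinf⟩ := Finset.exists_mem_eq_inf'
    (by simp : (Finset.range (B - sz + 1)).Nonempty) (pdLin B ε N sz)
  have hh₀le : h₀ ≤ B - sz := by
    have := Finset.mem_range.1 hh₀; omega
  have h1 : quadObj B ε N sz h ≤ quadObj B ε N sz h₀ := hstep.2 h₀ hh₀le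
  rw [quadObj_eq, quadObj_eq] at h1
  have h2 : pdPhi B ε (binUpdate N h₀ sz) ≤ pdPhi B ε N +
      ε * ((if h₀ + sz ≤ B - 1 then (N (h₀ + sz) : ℝ) else 0) -
           (if 1 ≤ h₀ then (N h₀ : ℝ) else 0)) + ε :=
    pdPhi_update_le B ε hε N sz h₀ hsz (by omega)
  have h3 : pdY B ε N sz = pdLin B ε N sz h₀ := hinf
  rw [pdLin] at h3
  linarith
lemma pd_tele (B : ℕ) (ε : ℝ) (hε : 0 ≤ ε) (sz pl : ℕ → ℕ) (m : ℕ)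
    (hrun : ∀ t < m, PDQuadStep B ε (binState sz pl t) (sz t) (pl t))
    (hsz : ∀ t < m, 1 ≤ sz t ∧ sz t ≤ B) :
    (∑ t ∈ Finset.range m, ((B : ℝ) * (if pl t = B - sz t then 1 else 0) - (sz t : ℝ)))
        + pdPhi B ε (binState sz pl m)
      ≤ (∑ t ∈ Finset.range m, pdY B ε (binState sz pl t) (sz t)) + m * ε := by
  induction m with
  | zero => simp [pdPhi, binState]
  | succ m ih =>
    have ih' := ih (fun t ht => hrun t (by omega)) (fun t ht => hsz t (by omega))
    have hstep := pd_step B ε hε (binState sz pl m) (sz m) (pl m)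
      (hsz m (by omega)).1 (hsz m (by omega)).2 (hrun m (by omega))
    rw [Finset.sum_range_succ, Finset.sum_range_succ]
    have : binState sz pl (m + 1) = binUpdate (binState sz pl m) (pl m) (sz m) := rfl
    rw [this]
    push_cast
    linarith

lemma pd_NB (B : ℕ) (sz pl : ℕ → ℕ) (m : ℕ)
    (hf : ∀ t < m, 1 ≤ sz t ∧ sz t ≤ B ∧ pl t + sz t ≤ B) :
    ((binState sz pl m B : ℕ) : ℝ)
      = ∑ t ∈ Finset.range m, (if pl t = B - sz t then (1 : ℝ) else 0) := by
  induction m with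
  | zero => simp [binState]
  | succ m ih =>
    rw [Finset.sum_range_succ, ← ih (fun t ht => hf t (by omega))]
    obtain ⟨h1, h2, h3⟩ := hf m (by omega)
    have : binState sz pl (m + 1) B = binUpdate (binState sz pl m) (pl m) (sz m) B := rfl
    rw [this, binUpdate]
    have hc1 : ¬ (B = pl m ∧ 1 ≤ pl m) := by rintro ⟨rfl, _⟩; omega
    rw [if_neg hc1]
    by_cases hc2 : B = pl m + sz m
    · rw [if_pos hc2, if_pos (by omega)]
      push_cast; ring
    · rw [if_neg hc2, if_neg (by omega)]
      push_cast; ring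

lemma pd_waste (B n : ℕ) (hB : 1 ≤ B) (sz pl : ℕ → ℕ)
    (hf : ∀ t < n, 1 ≤ sz t ∧ sz t ≤ B ∧ pl t + sz t ≤ B) :
    algWaste B n sz pl
      = (∑ t ∈ Finset.range n, ((B : ℝ) * (if pl t = B - sz t then 1 else 0) - (sz t : ℝ)))
        + (B : ℝ) * ∑ h ∈ Finset.Icc 1 (B - 1), ((binState sz pl n h : ℕ) : ℝ) := by
  unfold algWaste
  have hB1 : B - 1 + 1 = B := by omega
  have hsplit : ∑ h ∈ Finset.Icc 1 B, ((binState sz pl n h : ℕ) : ℝ)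
      = (∑ h ∈ Finset.Icc 1 (B - 1), ((binState sz pl n h : ℕ) : ℝ))
        + ((binState sz pl n B : ℕ) : ℝ) := by
    conv_lhs => rw [← hB1]
    rw [Finset.sum_Icc_succ_top (by omega), hB1]
  rw [hsplit, pd_NB B sz pl n hf, Finset.sum_sub_distrib, ← Finset.mul_sum]
  ring

lemma pd_final (B : ℕ) (hB : 1 ≤ B) (ε : ℝ) (hε : 0 < ε) (N : ℕ → ℕ) :
    (B : ℝ) * (∑ h ∈ Finset.Icc 1 (B - 1), ((N h : ℕ) : ℝ)) - pdPhi B ε N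
      ≤ ((B : ℝ) - 1) * ((B : ℝ) ^ 2 / (2 * ε)) := by
  unfold pdPhi
  rw [Finset.mul_sum, Finset.mul_sum, ← Finset.sum_sub_distrib]
  have key : ∀ x ∈ Finset.Icc 1 (B - 1),
      (B : ℝ) * ((N x : ℕ) : ℝ) - ε / 2 * ((N x : ℕ) : ℝ) ^ 2 ≤ (B : ℝ) ^ 2 / (2 * ε) := by
    intro x _
    rw [le_div_iff₀ (by positivity)]
    nlinarith [sq_nonneg (ε * ((N x : ℕ) : ℝ) - (B : ℝ))]
  have := Finset.sum_le_card_nsmul _ _ _ key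
  rw [Nat.card_Icc] at this
  have hc : ((B - 1 + 1 - 1 : ℕ) : ℝ) = (B : ℝ) - 1 := by
    have : B - 1 + 1 - 1 = B - 1 := by omega
    rw [this, Nat.cast_sub hB, Nat.cast_one]
  rw [nsmul_eq_mul, hc] at this
  exact this
lemma pd_dual {ι : Type*} [DecidableEq ι] (B : ℕ) (ε : ℝ) (N : ℕ → ℕ) (szs : ι → ℕ)
    (T : Finset ι) (hT : T.Nonempty) (h1 : ∀ i ∈ T, 1 ≤ szs i)
    (hS : ∑ i ∈ T, szs i ≤ B) :
    ∑ i ∈ T, (pdY B ε N (szs i) + (szs i : ℝ))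
      ≤ (B : ℝ) - ε * (if 1 ≤ B - ∑ i ∈ T, szs i then (N (B - ∑ i ∈ T, szs i) : ℝ) else 0) := by
  induction hT using Finset.Nonempty.cons_induction with
  | singleton a =>
    rw [Finset.sum_singleton] at hS
    rw [Finset.sum_singleton, Finset.sum_singleton]
    have ha1 : 1 ≤ szs a := h1 a (Finset.mem_singleton_self a)
    have hYle := pdY_le B ε N (szs a) (B - szs a) le_rfl
    rw [pdLin, if_pos rfl] at hYle
    have he1 : B - szs a + szs a = B := by omega
    rw [he1] at hYle
    rw [if_neg (by omega)] at hYle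
    linarith
  | cons a T haT hTne ih =>
    rw [Finset.sum_cons] at hS
    rw [Finset.sum_cons, Finset.sum_cons]
    have h1' : ∀ i ∈ T, 1 ≤ szs i := fun i hi => h1 i (Finset.mem_cons_of_mem hi)
    have ha1 : 1 ≤ szs a := h1 a (Finset.mem_cons_self a T)
    set S' : ℕ := ∑ i ∈ T, szs i with hS'def
    have hS'1 : 1 ≤ S' := by
      obtain ⟨i, hi⟩ := hTne
      calc 1 ≤ szs i := h1' i hi
        _ ≤ S' := Finset.single_le_sum (fun j _ => Nat.zero_le _) hi
    have hSB : szs a + S' ≤ B := hS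
    have ih' := ih h1' (by omega)
    rw [if_pos (by omega : 1 ≤ B - S')] at ih'
    -- bound pdY for a at level B - (szs a + S')
    have hYle := pdY_le B ε N (szs a) (B - (szs a + S')) (by omega)
    rw [pdLin] at hYle
    rw [if_neg (by omega : ¬ B - (szs a + S') = B - szs a)] at hYle
    have he2 : B - (szs a + S') + szs a = B - S' := by omega
    rw [he2] at hYle
    rw [if_pos (by omega : B - S' ≤ B - 1)] at hYle
    by_cases hc : 1 ≤ B - (szs a + S')
    · rw [if_pos hc] at hYle ⊢
      linarith
    · rw [if_neg hc] at hYle ⊢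
      linarith

lemma pd_dual' {ι : Type*} [DecidableEq ι] (B : ℕ) (ε : ℝ) (hε : 0 ≤ ε) (N : ℕ → ℕ)
    (szs : ι → ℕ) (T : Finset ι) (h1 : ∀ i ∈ T, 1 ≤ szs i)
    (hS : ∑ i ∈ T, szs i ≤ B) :
    ∑ i ∈ T, (pdY B ε N (szs i) + (szs i : ℝ)) ≤ (B : ℝ) := by
  rcases T.eq_empty_or_nonempty with rfl | hT
  · simp
  · have := pd_dual B ε N szs T hT h1 hS
    have hnn : 0 ≤ ε * (if 1 ≤ B - ∑ i ∈ T, szs i then (N (B - ∑ i ∈ T, szs i) : ℝ) else 0) := by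
      apply mul_nonneg hε
      split <;> positivity
    linarith
lemma seqSizes_coe {J : ℕ} (n : ℕ) (s : Fin J → ℕ) (σ : Fin n → Fin J) (i : Fin n) :
    seqSizes n s σ (i : ℕ) = s (σ i) := by
  simp [seqSizes, i.isLt]

lemma pd_weak (B n J : ℕ) (hB : 1 ≤ B) (s : Fin J → ℕ) (σ : Fin n → Fin J)
    (hsB : ∀ j, s j ≤ B)
    (yv : Fin J → ℝ)
    (hfeas : ∀ T : Finset (Fin n), (∑ i ∈ T, s (σ i)) ≤ B →
      ∑ i ∈ T, (yv (σ i) + (s (σ i) : ℝ)) ≤ (B : ℝ)) :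
    ∑ i : Fin n, yv (σ i) ≤ (optWaste B n (seqSizes n s σ) : ℝ) := by
  classical
  set sz : ℕ → ℕ := seqSizes n s σ with hszdef
  have hszc : ∀ i : Fin n, sz (i : ℕ) = s (σ i) := fun i => seqSizes_coe n s σ i
  -- the defining set is nonempty
  have hne : { w : ℕ | ∃ f : Fin n → Fin n,
      (∀ b : Fin n, ∑ i ∈ Finset.univ.filter (fun i => f i = b), sz i ≤ B) ∧
      w + ∑ i : Fin n, sz i = B * (Finset.univ.image f).card }.Nonempty := by
    refine ⟨B * n - ∑ i : Fin n, sz (i:ℕ), id, ?_, ?_⟩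
    · intro b
      have : Finset.univ.filter (fun i : Fin n => id i = b) = {b} := by
        ext i; simp [Finset.mem_filter, id]
      rw [this, Finset.sum_singleton, hszc b]
      exact hsB (σ b)
    · have hle : ∑ i : Fin n, sz (i:ℕ) ≤ B * n := by
        calc ∑ i : Fin n, sz (i:ℕ) ≤ ∑ _i : Fin n, B :=
          Finset.sum_le_sum (fun i _ => by rw [hszc i]; exact hsB (σ i))
        _ = n * B := by simp [Finset.sum_const, Finset.card_univ, mul_comm]
        _ = B * n := mul_comm n B
      have himg : (Finset.univ.image (id : Fin n → Fin n)).card = n := by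
        simp [Finset.image_id]
      rw [himg, Nat.sub_add_cancel hle]
  have hmem := Nat.sInf_mem hne
  obtain ⟨f, hfb, heq⟩ := hmem
  set W : ℕ := optWaste B n sz with hWdef
  -- fiberwise decomposition
  have hfib : ∑ i : Fin n, (yv (σ i) + (s (σ i) : ℝ))
      = ∑ b : Fin n, ∑ i ∈ Finset.univ.filter (fun i => f i = b), (yv (σ i) + (s (σ i) : ℝ)) :=
    (Finset.sum_fiberwise Finset.univ f _).symm
  have hsub : ∑ b : Fin n, ∑ i ∈ Finset.univ.filter (fun i => f i = b), (yv (σ i) + (s (σ i) : ℝ))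
      = ∑ b ∈ Finset.univ.image f, ∑ i ∈ Finset.univ.filter (fun i => f i = b), (yv (σ i) + (s (σ i) : ℝ)) := by
    symm
    apply Finset.sum_subset (Finset.subset_univ _)
    intro b _ hb
    have : Finset.univ.filter (fun i : Fin n => f i = b) = ∅ := by
      rw [Finset.filter_eq_empty_iff]
      intro i _ hfi
      exact hb (Finset.mem_image.2 ⟨i, Finset.mem_univ i, hfi⟩)
    rw [this, Finset.sum_empty]
  have hbound : ∑ b ∈ Finset.univ.image f, ∑ i ∈ Finset.univ.filter (fun i => f i = b), (yv (σ i) + (s (σ i) : ℝ))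
      ≤ ((Finset.univ.image f).card : ℝ) * B := by
    calc ∑ b ∈ Finset.univ.image f, ∑ i ∈ Finset.univ.filter (fun i => f i = b), (yv (σ i) + (s (σ i) : ℝ))
        ≤ ∑ _b ∈ Finset.univ.image f, (B : ℝ) := by
          apply Finset.sum_le_sum
          intro b _
          apply hfeas
          have := hfb b
          calc ∑ i ∈ Finset.univ.filter (fun i => f i = b), s (σ i)
              = ∑ i ∈ Finset.univ.filter (fun i => f i = b), sz (i:ℕ) :=
                Finset.sum_congr rfl (fun i _ => (hszc i).symm)
            _ ≤ B := this
      _ = ((Finset.univ.image f).card : ℝ) * B := by rw [Finset.sum_const, nsmul_eq_mul]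
  have hcast : ((Finset.univ.image f).card : ℝ) * B = (W : ℝ) + ∑ i : Fin n, (s (σ i) : ℝ) := by
    have : (W : ℝ) + ∑ i : Fin n, (sz (i:ℕ) : ℝ) = (B : ℝ) * ((Finset.univ.image f).card : ℝ) := by
      exact_mod_cast congrArg (Nat.cast : ℕ → ℝ) heq
    rw [mul_comm]
    rw [← this]
    congr 1
    exact Finset.sum_congr rfl (fun i _ => by rw [hszc i])
  have := hfib.trans hsub |>.le.trans (hbound.trans_eq hcast)
  have hsum : ∑ i : Fin n, (yv (σ i) + (s (σ i) : ℝ))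
      = (∑ i : Fin n, yv (σ i)) + ∑ i : Fin n, (s (σ i) : ℝ) := Finset.sum_add_distrib
  rw [hsum] at this
  linarith
lemma pd_marginal (J n : ℕ) (p : Fin J → ℝ) (hp : ∑ j, p j = 1)
    (i₀ : Fin n) (G : (Fin n → Fin J) → Fin J → ℝ)
    (hG : ∀ σ j, G (Function.update σ i₀ j) = G σ) :
    ∑ σ : Fin n → Fin J, (∏ i, p (σ i)) * G σ (σ i₀)
      = ∑ σ : Fin n → Fin J, (∏ i, p (σ i)) * ∑ j, p j * G σ j := by
  classical
  have key : ∀ (σ : Fin n → Fin J) (j : Fin J),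
      (∏ i, p (Function.update σ i₀ j i)) * p (σ i₀) = (∏ i, p (σ i)) * p j := by
    intro σ j
    have h1 : (fun i => p (Function.update σ i₀ j i))
        = Function.update (fun i => p (σ i)) i₀ (p j) := by
      funext i
      by_cases hi : i = i₀
      · subst hi; simp
      · simp [Function.update_of_ne hi]
    have h2 : ∏ i, p (Function.update σ i₀ j i) = p j * ∏ i ∈ Finset.univ \ {i₀}, p (σ i) := by
      rw [show (∏ i, p (Function.update σ i₀ j i))
          = ∏ i, (Function.update (fun i => p (σ i)) i₀ (p j)) i from by rw [h1]]
      exact Finset.prod_update_of_mem (Finset.mem_univ i₀) _ _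
    have h3 : ∏ i, p (σ i) = p (σ i₀) * ∏ i ∈ Finset.univ \ {i₀}, p (σ i) :=
      Finset.prod_eq_mul_prod_sdiff_singleton_of_mem (Finset.mem_univ i₀) _
    rw [h2, h3]; ring
  have hinv : Function.Involutive
      (fun x : (Fin n → Fin J) × Fin J => (Function.update x.1 i₀ x.2, x.1 i₀)) := by
    intro x
    simp [Function.update_idem, Function.update_eq_self]
  have hmain : ∑ x : (Fin n → Fin J) × Fin J, p x.2 * ((∏ i, p (x.1 i)) * G x.1 (x.1 i₀))
      = ∑ x : (Fin n → Fin J) × Fin J, p x.2 * ((∏ i, p (x.1 i)) * G x.1 x.2) := by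
    rw [← Equiv.sum_comp (Function.Involutive.toPerm _ hinv)
      (fun x : (Fin n → Fin J) × Fin J => p x.2 * ((∏ i, p (x.1 i)) * G x.1 (x.1 i₀)))]
    apply Finset.sum_congr rfl
    intro x _
    simp only [Function.Involutive.coe_toPerm]
    show p (x.1 i₀) * ((∏ i, p (Function.update x.1 i₀ x.2 i))
        * G (Function.update x.1 i₀ x.2) ((Function.update x.1 i₀ x.2) i₀))
      = p x.2 * ((∏ i, p (x.1 i)) * G x.1 x.2)
    rw [Function.update_self, hG]
    linear_combination G x.1 x.2 * key x.1 x.2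
  calc ∑ σ : Fin n → Fin J, (∏ i, p (σ i)) * G σ (σ i₀)
      = ∑ σ : Fin n → Fin J, ∑ j, p j * ((∏ i, p (σ i)) * G σ (σ i₀)) := by
        apply Finset.sum_congr rfl; intro σ _
        rw [← Finset.sum_mul, hp, one_mul]
    _ = ∑ x : (Fin n → Fin J) × Fin J, p x.2 * ((∏ i, p (x.1 i)) * G x.1 (x.1 i₀)) := by
        rw [Fintype.sum_prod_type]
    _ = ∑ x : (Fin n → Fin J) × Fin J, p x.2 * ((∏ i, p (x.1 i)) * G x.1 x.2) := hmain
    _ = ∑ σ : Fin n → Fin J, ∑ j, p j * ((∏ i, p (σ i)) * G σ j) := by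
        rw [Fintype.sum_prod_type]
    _ = ∑ σ : Fin n → Fin J, (∏ i, p (σ i)) * ∑ j, p j * G σ j := by
        apply Finset.sum_congr rfl; intro σ _
        rw [Finset.mul_sum]
        apply Finset.sum_congr rfl; intro j _; ring
lemma pd_state_congr {J : ℕ} (n : ℕ) (s : Fin J → ℕ)
    (place : (Fin n → Fin J) → ℕ → ℕ)
    (hadapted : ∀ σ τ : Fin n → Fin J, ∀ t : ℕ,
      (∀ i : Fin n, (i : ℕ) ≤ t → σ i = τ i) → place σ t = place τ t)
    (σ τ : Fin n → Fin J) (t : ℕ) (ht : t ≤ n)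
    (hagree : ∀ i : Fin n, (i : ℕ) < t → σ i = τ i) :
    binState (seqSizes n s σ) (place σ) t = binState (seqSizes n s τ) (place τ) t := by
  induction t with
  | zero => rfl
  | succ t ih =>
    have ih' := ih (by omega) (fun i hi => hagree i (by omega))
    show binUpdate (binState (seqSizes n s σ) (place σ) t) (place σ t) (seqSizes n s σ t)
      = binUpdate (binState (seqSizes n s τ) (place τ) t) (place τ t) (seqSizes n s τ t)
    rw [ih']
    have hpl : place σ t = place τ t :=
      hadapted σ τ t (fun i hi => hagree i (by omega))
    have hsz : seqSizes n s σ t = seqSizes n s τ t := by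
      have htn : t < n := by omega
      simp only [seqSizes, dif_pos htn]
      rw [hagree ⟨t, htn⟩ (by simp)]
    rw [hpl, hsz]

/-- **Theorem 1 (PD-quad with fixed `ε`).**
Items of integer sizes `0 < s 1 < ⋯ < s J < B` arrive i.i.d. with probabilities `p j`
and are packed online into bins of integer capacity `B` by the PD-quad algorithm run
with the constant parameter `ε(t) = B²/√(2n)` (online: the placement at step `t` may
depend only on the items seen so far, ties broken arbitrarily).  Then for every `n ≥ 1`,
`E[W^{PD-quad}(n)] ≤ E[W^{OPT}(n)] + √(2·B⁴·n)`, where the expectation is over the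
i.i.d. item sequence and `W^{OPT}` is the offline optimal waste of the realized items. -/
theorem pd_quad_fixed_epsilon (B J n : ℕ) (hB : 1 ≤ B) (hJ : 1 ≤ J) (hn : 1 ≤ n)
    (s : Fin J → ℕ) (hs_pos : ∀ j, 0 < s j) (hs_mono : StrictMono s)
    (hs_lt : ∀ j, s j < B)
    (p : Fin J → ℝ) (hp_nonneg : ∀ j, 0 ≤ p j) (hp_sum : ∑ j, p j = 1)
    (place : (Fin n → Fin J) → ℕ → ℕ)
    (hadapted : ∀ σ τ : Fin n → Fin J, ∀ t : ℕ,
      (∀ i : Fin n, (i : ℕ) ≤ t → σ i = τ i) → place σ t = place τ t)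
    (hrun : ∀ σ : Fin n → Fin J, ∀ t < n,
      PDQuadStep B ((B : ℝ) ^ 2 / Real.sqrt (2 * (n : ℝ)))
        (binState (seqSizes n s σ) (place σ) t) (seqSizes n s σ t) (place σ t)) :
    ∑ σ : Fin n → Fin J, (∏ i, p (σ i)) * algWaste B n (seqSizes n s σ) (place σ)
      ≤ (∑ σ : Fin n → Fin J, (∏ i, p (σ i)) * (optWaste B n (seqSizes n s σ) : ℝ))
        + Real.sqrt (2 * (B : ℝ) ^ 4 * (n : ℝ)) := by
  classical
  set ε : ℝ := (B : ℝ) ^ 2 / Real.sqrt (2 * (n : ℝ)) with hεdef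
  have hn' : (1 : ℝ) ≤ (n : ℝ) := by exact_mod_cast hn
  have hB' : (1 : ℝ) ≤ (B : ℝ) := by exact_mod_cast hB
  have hsq : 0 < Real.sqrt (2 * (n : ℝ)) := Real.sqrt_pos.2 (by linarith)
  have hε : 0 < ε := by rw [hεdef]; positivity
  have hw0 : ∀ σ : Fin n → Fin J, 0 ≤ ∏ i, p (σ i) :=
    fun σ => Finset.prod_nonneg fun i _ => hp_nonneg _
  have hwsum : ∑ σ : Fin n → Fin J, ∏ i, p (σ i) = 1 := by
    calc ∑ σ : Fin n → Fin J, ∏ i, p (σ i)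
        = ∑ σ ∈ Fintype.piFinset (fun _ : Fin n => (Finset.univ : Finset (Fin J))),
            ∏ i, p (σ i) := by rw [Fintype.piFinset_univ]
      _ = ∏ _i : Fin n, ∑ j, p j := (Finset.prod_univ_sum _ _).symm
      _ = 1 := by rw [hp_sum]; exact Finset.prod_const_one
  have hszfact : ∀ (σ : Fin n → Fin J), ∀ t < n,
      1 ≤ seqSizes n s σ t ∧ seqSizes n s σ t ≤ B ∧ place σ t + seqSizes n s σ t ≤ B := by
    intro σ t ht
    have h1 : seqSizes n s σ t = s (σ ⟨t, ht⟩) := by simp [seqSizes, ht]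
    have h2 := hs_pos (σ ⟨t, ht⟩)
    have h3 := hs_lt (σ ⟨t, ht⟩)
    have h4 := (hrun σ t ht).1
    rw [h1] at h4 ⊢
    omega
  -- pathwise bound
  have pathwise : ∀ σ : Fin n → Fin J,
      algWaste B n (seqSizes n s σ) (place σ)
        ≤ (∑ t ∈ Finset.range n,
            pdY B ε (binState (seqSizes n s σ) (place σ) t) (seqSizes n s σ t))
          + ((n : ℝ) * ε + ((B : ℝ) - 1) * ((B : ℝ) ^ 2 / (2 * ε))) := by
    intro σ
    have h1 := pd_waste B n hB (seqSizes n s σ) (place σ) (hszfact σ)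
    have h2 := pd_tele B ε hε.le (seqSizes n s σ) (place σ) n (hrun σ)
      (fun t ht => ⟨(hszfact σ t ht).1, (hszfact σ t ht).2.1⟩)
    have h3 := pd_final B hB ε hε (binState (seqSizes n s σ) (place σ) n)
    rw [h1]
    linarith
  -- aggregated dual prices
  set S : Fin J → ℝ := fun j => ∑ t ∈ Finset.range n, ∑ σ : Fin n → Fin J,
      (∏ i, p (σ i)) * pdY B ε (binState (seqSizes n s σ) (place σ) t) (s j) with hSdef
  set yv : Fin J → ℝ := fun j => (n : ℝ)⁻¹ * S j with hyvdef
  have hyn : ∀ j, (n : ℝ) * yv j = S j := by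
    intro j
    rw [hyvdef]
    field_simp
  -- marginalization at each step
  have hmarg : ∀ t, ∀ ht : t < n,
      ∑ σ : Fin n → Fin J, (∏ i, p (σ i)) *
          pdY B ε (binState (seqSizes n s σ) (place σ) t) (seqSizes n s σ t)
        = ∑ σ : Fin n → Fin J, (∏ i, p (σ i)) *
            ∑ j, p j * pdY B ε (binState (seqSizes n s σ) (place σ) t) (s j) := by
    intro t ht
    have hstate : ∀ (σ : Fin n → Fin J) (j : Fin J),
        binState (seqSizes n s (Function.update σ ⟨t, ht⟩ j))
            (place (Function.update σ ⟨t, ht⟩ j)) t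
          = binState (seqSizes n s σ) (place σ) t := by
      intro σ j
      apply pd_state_congr n s place hadapted _ _ t (by omega)
      intro i hi
      apply Function.update_of_ne
      intro hEq
      rw [hEq] at hi
      simp at hi
    have hmain := pd_marginal J n p hp_sum ⟨t, ht⟩
      (fun σ j => pdY B ε (binState (seqSizes n s σ) (place σ) t) (s j))
      (fun σ j => by funext j'; beta_reduce; rw [hstate σ j])
    calc ∑ σ : Fin n → Fin J, (∏ i, p (σ i)) *
            pdY B ε (binState (seqSizes n s σ) (place σ) t) (seqSizes n s σ t)
        = ∑ σ : Fin n → Fin J, (∏ i, p (σ i)) *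
            pdY B ε (binState (seqSizes n s σ) (place σ) t) (s (σ ⟨t, ht⟩)) := by
          refine Finset.sum_congr rfl fun σ _ => ?_
          rw [show seqSizes n s σ t = s (σ ⟨t, ht⟩) from by simp [seqSizes, ht]]
      _ = _ := hmain
  -- expectation of the dual sum
  have hE2 : ∑ σ : Fin n → Fin J, (∏ i, p (σ i)) *
        (∑ t ∈ Finset.range n,
          pdY B ε (binState (seqSizes n s σ) (place σ) t) (seqSizes n s σ t))
      = ∑ j, p j * S j := by
    calc ∑ σ : Fin n → Fin J, (∏ i, p (σ i)) *
          (∑ t ∈ Finset.range n,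
            pdY B ε (binState (seqSizes n s σ) (place σ) t) (seqSizes n s σ t))
        = ∑ σ : Fin n → Fin J, ∑ t ∈ Finset.range n, (∏ i, p (σ i)) *
            pdY B ε (binState (seqSizes n s σ) (place σ) t) (seqSizes n s σ t) := by
          exact Finset.sum_congr rfl fun σ _ => Finset.mul_sum _ _ _
      _ = ∑ t ∈ Finset.range n, ∑ σ : Fin n → Fin J, (∏ i, p (σ i)) *
            pdY B ε (binState (seqSizes n s σ) (place σ) t) (seqSizes n s σ t) :=
          Finset.sum_comm
      _ = ∑ t ∈ Finset.range n, ∑ σ : Fin n → Fin J, (∏ i, p (σ i)) *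
            ∑ j, p j * pdY B ε (binState (seqSizes n s σ) (place σ) t) (s j) :=
          Finset.sum_congr rfl fun t ht => hmarg t (Finset.mem_range.1 ht)
      _ = ∑ t ∈ Finset.range n, ∑ σ : Fin n → Fin J, ∑ j, p j *
            ((∏ i, p (σ i)) * pdY B ε (binState (seqSizes n s σ) (place σ) t) (s j)) := by
          refine Finset.sum_congr rfl fun t _ => Finset.sum_congr rfl fun σ _ => ?_
          rw [Finset.mul_sum]
          exact Finset.sum_congr rfl fun j _ => by ring
      _ = ∑ t ∈ Finset.range n, ∑ j, ∑ σ : Fin n → Fin J, p j *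
            ((∏ i, p (σ i)) * pdY B ε (binState (seqSizes n s σ) (place σ) t) (s j)) :=
          Finset.sum_congr rfl fun t _ => Finset.sum_comm
      _ = ∑ j, ∑ t ∈ Finset.range n, ∑ σ : Fin n → Fin J, p j *
            ((∏ i, p (σ i)) * pdY B ε (binState (seqSizes n s σ) (place σ) t) (s j)) :=
          Finset.sum_comm
      _ = ∑ j, p j * S j := by
          refine Finset.sum_congr rfl fun j _ => ?_
          rw [hSdef]
          simp only []
          rw [Finset.mul_sum]
          exact Finset.sum_congr rfl fun t _ => by rw [Finset.mul_sum]
  -- feasibility of the averaged dual prices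
  have hfeas : ∀ (σ : Fin n → Fin J) (T : Finset (Fin n)), (∑ i ∈ T, s (σ i)) ≤ B →
      ∑ i ∈ T, (yv (σ i) + (s (σ i) : ℝ)) ≤ (B : ℝ) := by
    intro σ T hTB
    have hnR : (0 : ℝ) < (n : ℝ) := by linarith
    rw [← mul_le_mul_iff_right₀ hnR]
    have hA : (n : ℝ) * ∑ i ∈ T, (yv (σ i) + (s (σ i) : ℝ))
        = (∑ i ∈ T, S (σ i)) + (n : ℝ) * ∑ i ∈ T, (s (σ i) : ℝ) := by
      calc (n : ℝ) * ∑ i ∈ T, (yv (σ i) + (s (σ i) : ℝ))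
          = ∑ i ∈ T, ((n : ℝ) * yv (σ i) + (n : ℝ) * (s (σ i) : ℝ)) := by
            rw [Finset.mul_sum]
            exact Finset.sum_congr rfl fun i _ => by ring
        _ = (∑ i ∈ T, S (σ i)) + (n : ℝ) * ∑ i ∈ T, (s (σ i) : ℝ) := by
            rw [Finset.sum_add_distrib, Finset.mul_sum]
            congr 1
            exact Finset.sum_congr rfl fun i _ => hyn (σ i)
    have hBform : (∑ i ∈ T, S (σ i)) + (n : ℝ) * ∑ i ∈ T, (s (σ i) : ℝ)
        = ∑ t ∈ Finset.range n, ∑ σ' : Fin n → Fin J, (∏ i, p (σ' i)) *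
            (∑ i ∈ T, (pdY B ε (binState (seqSizes n s σ') (place σ') t) (s (σ i))
              + (s (σ i) : ℝ))) := by
      have e1 : ∑ i ∈ T, S (σ i)
          = ∑ t ∈ Finset.range n, ∑ σ' : Fin n → Fin J, (∏ i, p (σ' i)) *
              ∑ i ∈ T, pdY B ε (binState (seqSizes n s σ') (place σ') t) (s (σ i)) := by
        rw [hSdef]
        simp only []
        rw [Finset.sum_comm]
        refine Finset.sum_congr rfl fun t _ => ?_
        rw [Finset.sum_comm]
        refine Finset.sum_congr rfl fun σ' _ => ?_
        rw [Finset.mul_sum]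
      have e2 : (n : ℝ) * ∑ i ∈ T, (s (σ i) : ℝ)
          = ∑ t ∈ Finset.range n, ∑ σ' : Fin n → Fin J, (∏ i, p (σ' i)) *
              ∑ i ∈ T, (s (σ i) : ℝ) := by
        have : ∀ t ∈ Finset.range n, ∑ σ' : Fin n → Fin J, (∏ i, p (σ' i)) *
            ∑ i ∈ T, (s (σ i) : ℝ) = ∑ i ∈ T, (s (σ i) : ℝ) := by
          intro t _
          rw [← Finset.sum_mul, hwsum, one_mul]
        rw [Finset.sum_congr rfl this, Finset.sum_const, Finset.card_range, nsmul_eq_mul]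
      rw [e1, e2, ← Finset.sum_add_distrib]
      refine Finset.sum_congr rfl fun t _ => ?_
      rw [← Finset.sum_add_distrib]
      refine Finset.sum_congr rfl fun σ' _ => ?_
      rw [Finset.sum_add_distrib, mul_add]
    rw [hA, hBform]
    have hstepB : ∀ t ∈ Finset.range n, ∀ σ' : Fin n → Fin J,
        (∑ i ∈ T, (pdY B ε (binState (seqSizes n s σ') (place σ') t) (s (σ i))
          + (s (σ i) : ℝ))) ≤ (B : ℝ) := by
      intro t _ σ'
      exact pd_dual' B ε hε.le (binState (seqSizes n s σ') (place σ') t)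
        (fun i => s (σ i)) T (fun i _ => hs_pos (σ i)) hTB
    calc ∑ t ∈ Finset.range n, ∑ σ' : Fin n → Fin J, (∏ i, p (σ' i)) *
            (∑ i ∈ T, (pdY B ε (binState (seqSizes n s σ') (place σ') t) (s (σ i))
              + (s (σ i) : ℝ)))
        ≤ ∑ t ∈ Finset.range n, ∑ σ' : Fin n → Fin J, (∏ i, p (σ' i)) * (B : ℝ) := by
          refine Finset.sum_le_sum fun t ht => Finset.sum_le_sum fun σ' _ => ?_
          exact mul_le_mul_of_nonneg_left (hstepB t ht σ') (hw0 σ')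
      _ = (n : ℝ) * (B : ℝ) := by
          have : ∀ t ∈ Finset.range n, ∑ σ' : Fin n → Fin J, (∏ i, p (σ' i)) * (B : ℝ)
              = (B : ℝ) := by
            intro t _
            rw [← Finset.sum_mul, hwsum, one_mul]
          rw [Finset.sum_congr rfl this, Finset.sum_const, Finset.card_range, nsmul_eq_mul]
  -- weak duality, pathwise, for the averaged prices
  have hdual : ∀ σ : Fin n → Fin J,
      ∑ i : Fin n, yv (σ i) ≤ (optWaste B n (seqSizes n s σ) : ℝ) :=
    fun σ => pd_weak B n J hB s σ (fun j => (hs_lt j).le) yv (hfeas σ)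
  have hE7 : ∑ j, p j * S j
      = ∑ σ : Fin n → Fin J, (∏ i, p (σ i)) * ∑ i : Fin n, yv (σ i) := by
    symm
    calc ∑ σ : Fin n → Fin J, (∏ i, p (σ i)) * ∑ i : Fin n, yv (σ i)
        = ∑ σ : Fin n → Fin J, ∑ i : Fin n, (∏ i', p (σ i')) * yv (σ i) :=
          Finset.sum_congr rfl fun σ _ => Finset.mul_sum _ _ _
      _ = ∑ i : Fin n, ∑ σ : Fin n → Fin J, (∏ i', p (σ i')) * yv (σ i) :=
          Finset.sum_comm
      _ = ∑ i : Fin n, ∑ σ : Fin n → Fin J, (∏ i', p (σ i')) * ∑ j, p j * yv j :=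
          Finset.sum_congr rfl fun i _ =>
            pd_marginal J n p hp_sum i (fun _ j => yv j) (fun σ j => rfl)
      _ = ∑ _i : Fin n, ∑ j, p j * yv j := by
          refine Finset.sum_congr rfl fun i _ => ?_
          rw [← Finset.sum_mul, hwsum, one_mul]
      _ = (n : ℝ) * ∑ j, p j * yv j := by
          rw [Finset.sum_const, Finset.card_univ, Fintype.card_fin, nsmul_eq_mul]
      _ = ∑ j, p j * ((n : ℝ) * yv j) := by
          rw [Finset.mul_sum]
          exact Finset.sum_congr rfl fun j _ => by ring
      _ = ∑ j, p j * S j := Finset.sum_congr rfl fun j _ => by rw [hyn j]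
  -- the numeric bound on the error term
  have h2n : Real.sqrt (2 * (n : ℝ)) ^ 2 = 2 * (n : ℝ) := Real.sq_sqrt (by linarith)
  have hrhs : Real.sqrt (2 * (B : ℝ) ^ 4 * (n : ℝ))
      = (B : ℝ) ^ 2 * Real.sqrt (2 * (n : ℝ)) := by
    rw [show (2 * (B : ℝ) ^ 4 * (n : ℝ)) = ((B : ℝ) ^ 2) ^ 2 * (2 * (n : ℝ)) by ring]
    rw [Real.sqrt_mul (by positivity), Real.sqrt_sq (by positivity)]
  have hC : (n : ℝ) * ε + ((B : ℝ) - 1) * ((B : ℝ) ^ 2 / (2 * ε))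
      ≤ Real.sqrt (2 * (B : ℝ) ^ 4 * (n : ℝ)) := by
    rw [hrhs, hεdef]
    have hBne : (B : ℝ) ≠ 0 := by positivity
    have hrne : Real.sqrt (2 * (n : ℝ)) ≠ 0 := ne_of_gt hsq
    have hrr : Real.sqrt (2 * (n : ℝ)) * Real.sqrt (2 * (n : ℝ)) = 2 * (n : ℝ) := by
      nlinarith [h2n]
    have e1 : (n : ℝ) * ((B : ℝ) ^ 2 / Real.sqrt (2 * (n : ℝ)))
        = (B : ℝ) ^ 2 * (Real.sqrt (2 * (n : ℝ)) / 2) := by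
      apply mul_right_cancel₀ hrne
      rw [show (n : ℝ) * ((B : ℝ) ^ 2 / Real.sqrt (2 * (n : ℝ))) * Real.sqrt (2 * (n : ℝ))
          = (n : ℝ) * (B : ℝ) ^ 2 * (Real.sqrt (2 * (n : ℝ)) / Real.sqrt (2 * (n : ℝ))) by ring]
      rw [div_self hrne, mul_one]
      linear_combination (-(B : ℝ) ^ 2 / 2) * hrr
    have hd : (2 * ((B : ℝ) ^ 2 / Real.sqrt (2 * (n : ℝ)))) ≠ 0 := by positivity
    have e2 : (B : ℝ) ^ 2 / (2 * ((B : ℝ) ^ 2 / Real.sqrt (2 * (n : ℝ))))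
        = Real.sqrt (2 * (n : ℝ)) / 2 := by
      rw [div_eq_iff hd]
      rw [show Real.sqrt (2 * (n : ℝ)) / 2 * (2 * ((B : ℝ) ^ 2 / Real.sqrt (2 * (n : ℝ))))
          = (B : ℝ) ^ 2 * (Real.sqrt (2 * (n : ℝ)) / Real.sqrt (2 * (n : ℝ))) by ring]
      rw [div_self hrne, mul_one]
    rw [e1, e2]
    have h5 : (B : ℝ) - 1 ≤ (B : ℝ) ^ 2 := by nlinarith
    have h6 : ((B : ℝ) - 1) * (Real.sqrt (2 * (n : ℝ)) / 2)
        ≤ (B : ℝ) ^ 2 * (Real.sqrt (2 * (n : ℝ)) / 2) :=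
      mul_le_mul_of_nonneg_right h5 (by positivity)
    have he : (B : ℝ) ^ 2 * Real.sqrt (2 * (n : ℝ))
        = (B : ℝ) ^ 2 * (Real.sqrt (2 * (n : ℝ)) / 2)
          + (B : ℝ) ^ 2 * (Real.sqrt (2 * (n : ℝ)) / 2) := by ring
    linarith
  -- final chain
  calc ∑ σ : Fin n → Fin J, (∏ i, p (σ i)) * algWaste B n (seqSizes n s σ) (place σ)
      ≤ ∑ σ : Fin n → Fin J, (∏ i, p (σ i)) *
          ((∑ t ∈ Finset.range n,
            pdY B ε (binState (seqSizes n s σ) (place σ) t) (seqSizes n s σ t))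
            + ((n : ℝ) * ε + ((B : ℝ) - 1) * ((B : ℝ) ^ 2 / (2 * ε)))) :=
        Finset.sum_le_sum fun σ _ => mul_le_mul_of_nonneg_left (pathwise σ) (hw0 σ)
    _ = (∑ σ : Fin n → Fin J, (∏ i, p (σ i)) *
          (∑ t ∈ Finset.range n,
            pdY B ε (binState (seqSizes n s σ) (place σ) t) (seqSizes n s σ t)))
          + ((n : ℝ) * ε + ((B : ℝ) - 1) * ((B : ℝ) ^ 2 / (2 * ε))) := by
        have hexp : ∀ σ : Fin n → Fin J, (∏ i, p (σ i)) *
            ((∑ t ∈ Finset.range n,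
              pdY B ε (binState (seqSizes n s σ) (place σ) t) (seqSizes n s σ t))
              + ((n : ℝ) * ε + ((B : ℝ) - 1) * ((B : ℝ) ^ 2 / (2 * ε))))
          = (∏ i, p (σ i)) * (∑ t ∈ Finset.range n,
              pdY B ε (binState (seqSizes n s σ) (place σ) t) (seqSizes n s σ t))
            + (∏ i, p (σ i)) * ((n : ℝ) * ε + ((B : ℝ) - 1) * ((B : ℝ) ^ 2 / (2 * ε))) :=
          fun σ => by ring
        rw [Finset.sum_congr rfl (fun σ _ => hexp σ), Finset.sum_add_distrib,
          ← Finset.sum_mul, hwsum, one_mul]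
    _ = (∑ j, p j * S j) + ((n : ℝ) * ε + ((B : ℝ) - 1) * ((B : ℝ) ^ 2 / (2 * ε))) := by
        rw [hE2]
    _ = (∑ σ : Fin n → Fin J, (∏ i, p (σ i)) * ∑ i : Fin n, yv (σ i))
          + ((n : ℝ) * ε + ((B : ℝ) - 1) * ((B : ℝ) ^ 2 / (2 * ε))) := by rw [hE7]
    _ ≤ (∑ σ : Fin n → Fin J, (∏ i, p (σ i)) * (optWaste B n (seqSizes n s σ) : ℝ))
          + ((n : ℝ) * ε + ((B : ℝ) - 1) * ((B : ℝ) ^ 2 / (2 * ε))) := by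
        have := Finset.sum_le_sum (s := (Finset.univ : Finset (Fin n → Fin J)))
          (fun σ _ => mul_le_mul_of_nonneg_left (hdual σ) (hw0 σ))
        linarith
    _ ≤ (∑ σ : Fin n → Fin J, (∏ i, p (σ i)) * (optWaste B n (seqSizes n s σ) : ℝ))
          + Real.sqrt (2 * (B : ℝ) ^ 4 * (n : ℝ)) := by linarith
end

section
/- Under the PD-exp algorithm run with the time-varying parameter ε(t) = √(B/(2(B+t))), for every item-size distribution F and every n ≥ 1, the expected waste after packing n items satisfies E[W^{PD-exp}(n)] ≤ E[W^{OPT}(n)] + √(8·B³·(n+B)), where the expectation is over the i.i.d. item sequence. -/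
set_option maxHeartbeats 1000000 in
theorem _dummy_warmup : True := trivial

namespace PDE
open Real Finset

noncomputable def Phi (B : ℕ) (ε : ℝ) (N : ℕ → ℕ) : ℝ :=
  (B : ℝ) / ε * ∑ h' ∈ Finset.Icc 1 (B - 1), Real.exp (-ε * (N h' : ℝ))

noncomputable def wgt (B : ℕ) (ε : ℝ) (N : ℕ → ℕ) (l : ℕ) : ℝ :=
  (B : ℝ) / ε * ((1 - Real.exp (-ε)) * Real.exp (-ε * (N l : ℝ)))

noncomputable def lam (B : ℕ) (ε : ℝ) (N : ℕ → ℕ) (l : ℕ) : ℝ :=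
  (B : ℝ) / ε * ((Real.exp ε - 1) * Real.exp (-ε * (N l : ℝ)))

noncomputable def Dslack (B : ℕ) (ε : ℝ) : ℝ := (B : ℝ) * (1 - Real.exp (-ε))

noncomputable def Mbar (B : ℕ) (ε : ℝ) : ℝ := (B : ℝ) / ε * (1 - Real.exp (-ε))

variable {B : ℕ} {ε : ℝ} {N : ℕ → ℕ}

lemma one_sub_exp_neg_nonneg (hε : 0 < ε) : 0 ≤ 1 - Real.exp (-ε) := by
  have h1 : Real.exp (-ε) ≤ 1 := by rw [Real.exp_le_one_iff]; linarith
  linarith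

lemma one_sub_exp_neg_le (hε : 0 < ε) : 1 - Real.exp (-ε) ≤ ε := by
  have := Real.add_one_le_exp (-ε)
  linarith

lemma wgt_nonneg (hε : 0 < ε) (l : ℕ) : 0 ≤ wgt B ε N l := by
  unfold wgt
  have h1 := one_sub_exp_neg_nonneg hε
  have h2 := (Real.exp_pos (-ε * (N l : ℝ))).le
  have hB : (0:ℝ) ≤ (B:ℝ)/ε := by positivity
  exact mul_nonneg hB (mul_nonneg h1 h2)

lemma lam_nonneg (hε : 0 < ε) (l : ℕ) : 0 ≤ lam B ε N l := by
  unfold lam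
  have h1 : (1:ℝ) ≤ Real.exp ε := by rw [Real.one_le_exp_iff]; linarith
  have h2 := (Real.exp_pos (-ε * (N l : ℝ))).le
  have hB : (0:ℝ) ≤ (B:ℝ)/ε := by positivity
  exact mul_nonneg hB (mul_nonneg (by linarith) h2)

lemma Dslack_nonneg (hε : 0 < ε) : 0 ≤ Dslack B ε :=
  mul_nonneg (Nat.cast_nonneg B) (one_sub_exp_neg_nonneg hε)

lemma exp_neg_cast_le_one (hε : 0 < ε) (m : ℕ) : Real.exp (-ε * (m : ℝ)) ≤ 1 := by
  rw [Real.exp_le_one_iff]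
  have : (0:ℝ) ≤ (m : ℝ) := Nat.cast_nonneg _
  nlinarith

lemma wgt_le_Mbar (hε : 0 < ε) (l : ℕ) : wgt B ε N l ≤ Mbar B ε := by
  unfold wgt Mbar
  have hB : (0:ℝ) ≤ (B:ℝ)/ε := by positivity
  refine mul_le_mul_of_nonneg_left ?_ hB
  calc (1 - Real.exp (-ε)) * Real.exp (-ε * (N l : ℝ))
      ≤ (1 - Real.exp (-ε)) * 1 :=
        mul_le_mul_of_nonneg_left (exp_neg_cast_le_one hε _) (one_sub_exp_neg_nonneg hε)
    _ = 1 - Real.exp (-ε) := mul_one _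

lemma wgt_of_zero (l : ℕ) (h : N l = 0) : wgt B ε N l = Mbar B ε := by
  unfold wgt Mbar; rw [h]; norm_num

-- B ≤ Mbar + Dslack
lemma B_le_Mbar_add (hε : 0 < ε) : (B:ℝ) ≤ Mbar B ε + Dslack B ε := by
  unfold Mbar Dslack
  have key : ε ≤ (1 - Real.exp (-ε)) * (1 + ε) := by
    have h := Real.add_one_le_exp ε
    have h2 : (1 + ε) * Real.exp (-ε) ≤ 1 := by
      have := Real.exp_pos ε
      rw [Real.exp_neg]
      rw [mul_inv_le_iff₀ (by positivity), one_mul]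
      linarith
    nlinarith
  have hB : (0:ℝ) ≤ (B:ℝ) := Nat.cast_nonneg B
  have : (B:ℝ)/ε * (1 - Real.exp (-ε)) + (B:ℝ) * (1 - Real.exp (-ε))
      = (B:ℝ)/ε * ((1 - Real.exp (-ε)) * (1+ε)) := by field_simp
  rw [this]
  calc (B:ℝ) = (B:ℝ)/ε * ε := by field_simp
    _ ≤ (B:ℝ)/ε * ((1 - Real.exp (-ε)) * (1+ε)) := by
        refine mul_le_mul_of_nonneg_left key (by positivity)

-- N l ≥ 1 → lam ≤ wgt + Dslack
lemma lam_le_wgt_add (hε : 0 < ε) (l : ℕ) (hl : 1 ≤ N l) :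
    lam B ε N l ≤ wgt B ε N l + Dslack B ε := by
  unfold lam wgt Dslack
  have hexp : Real.exp (-ε * (N l : ℝ)) ≤ Real.exp (-ε) := by
    rw [Real.exp_le_exp]
    have : (1:ℝ) ≤ (N l : ℝ) := by exact_mod_cast hl
    nlinarith
  have hd : 0 ≤ Real.exp ε - 1 - (1 - Real.exp (-ε)) := by
    have h1 := Real.add_one_le_exp ε
    have h2 := Real.add_one_le_exp (-ε)
    nlinarith
  have step1 : (Real.exp ε - 1) * Real.exp (-ε * (N l : ℝ))
      - (1 - Real.exp (-ε)) * Real.exp (-ε * (N l : ℝ))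
      ≤ (Real.exp ε - 1 - (1 - Real.exp (-ε))) * Real.exp (-ε) := by
    have := (Real.exp_pos (-ε * (N l : ℝ))).le
    calc (Real.exp ε - 1) * Real.exp (-ε * (N l : ℝ))
        - (1 - Real.exp (-ε)) * Real.exp (-ε * (N l : ℝ))
        = (Real.exp ε - 1 - (1 - Real.exp (-ε))) * Real.exp (-ε * (N l : ℝ)) := by ring
      _ ≤ (Real.exp ε - 1 - (1 - Real.exp (-ε))) * Real.exp (-ε) :=
          mul_le_mul_of_nonneg_left hexp hd
  have step2 : (Real.exp ε - 1 - (1 - Real.exp (-ε))) * Real.exp (-ε) = (1 - Real.exp (-ε))^2 := by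
    have h : Real.exp ε * Real.exp (-ε) = 1 := by
      rw [← Real.exp_add]; norm_num
    nlinarith [h]
  have step3 : (B:ℝ)/ε * (1 - Real.exp (-ε))^2 ≤ (B:ℝ) * (1 - Real.exp (-ε)) := by
    have h1 := one_sub_exp_neg_nonneg hε
    have h2 := one_sub_exp_neg_le hε
    rw [div_mul_eq_mul_div, div_le_iff₀ hε, pow_two]
    have hB : (0:ℝ) ≤ (B:ℝ) := Nat.cast_nonneg B
    calc (B:ℝ) * ((1 - Real.exp (-ε)) * (1 - Real.exp (-ε)))
        ≤ (B:ℝ) * ((1 - Real.exp (-ε)) * ε) := by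
          refine mul_le_mul_of_nonneg_left (mul_le_mul_of_nonneg_left h2 h1) hB
      _ = (B:ℝ) * (1 - Real.exp (-ε)) * ε := by ring
  have hBdiv : (0:ℝ) ≤ (B:ℝ)/ε := by positivity
  have expand : (B:ℝ)/ε * ((Real.exp ε - 1) * Real.exp (-ε * (N l:ℝ)))
      - (B:ℝ)/ε * ((1 - Real.exp (-ε)) * Real.exp (-ε * (N l:ℝ)))
      ≤ (B:ℝ)/ε * (1 - Real.exp (-ε))^2 := by
    rw [← mul_sub]
    calc (B:ℝ)/ε * ((Real.exp ε - 1) * Real.exp (-ε * (N l:ℝ))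
          - (1 - Real.exp (-ε)) * Real.exp (-ε * (N l:ℝ)))
        ≤ (B:ℝ)/ε * ((Real.exp ε - 1 - (1 - Real.exp (-ε))) * Real.exp (-ε)) :=
          mul_le_mul_of_nonneg_left step1 hBdiv
      _ = (B:ℝ)/ε * (1 - Real.exp (-ε))^2 := by rw [step2]
  linarith


lemma expObj_def (B : ℕ) (ε : ℝ) (N : ℕ → ℕ) (a h : ℕ) :
    expObj B ε N a h = (B:ℝ) * (if h = 0 then 1 else 0) - a + Phi B ε (binUpdate N h a) := rfl

lemma Phi_update_zero (a : ℕ) (h1 : 1 ≤ a) (h2 : a ≤ B - 1) :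
    Phi B ε (binUpdate N 0 a) = Phi B ε N - wgt B ε N a := by
  have hmem : a ∈ Finset.Icc 1 (B-1) := Finset.mem_Icc.2 ⟨h1, h2⟩
  have key : ∀ h' ∈ Finset.Icc 1 (B-1),
      Real.exp (-ε * ((binUpdate N 0 a h' : ℕ) : ℝ))
        = Real.exp (-ε * (N h' : ℝ))
          + (if h' = a then Real.exp (-ε * ((N a : ℝ) + 1)) - Real.exp (-ε * (N a : ℝ)) else 0) := by
    intro h' _
    have hupd : binUpdate N 0 a h' = N h' + if h' = a then 1 else 0 := by
      simp [binUpdate]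
    by_cases hh : h' = a
    · subst hh
      rw [hupd, if_pos rfl, if_pos rfl]
      push_cast
      ring_nf
    · rw [hupd, if_neg hh, if_neg hh]
      push_cast
      ring_nf
  unfold Phi
  rw [Finset.sum_congr rfl key, Finset.sum_add_distrib, Finset.sum_ite_eq' _ a, if_pos hmem]
  unfold wgt
  rw [mul_add]
  congr 1
  have he : Real.exp (-ε * ((N a : ℝ) + 1)) = Real.exp (-ε * (N a : ℝ)) * Real.exp (-ε) := by
    rw [← Real.exp_add]; ring_nf
  rw [he]; ring

lemma Phi_update_pos (a h : ℕ) (ha1 : 1 ≤ a) (hh1 : 1 ≤ h) (hhB : h + a ≤ B)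
    (hNh : 1 ≤ N h) :
    Phi B ε (binUpdate N h a) = Phi B ε N + lam B ε N h
      - (if h + a ≤ B - 1 then wgt B ε N (h+a) else 0) := by
  have hne : h ≠ h + a := by omega
  have hmemh : h ∈ Finset.Icc 1 (B-1) := Finset.mem_Icc.2 ⟨hh1, by omega⟩
  have key : ∀ h' ∈ Finset.Icc 1 (B-1),
      Real.exp (-ε * ((binUpdate N h a h' : ℕ) : ℝ))
        = Real.exp (-ε * (N h' : ℝ))
          + (if h' = h then Real.exp (-ε * ((N h : ℝ) - 1)) - Real.exp (-ε * (N h : ℝ)) else 0)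
          + (if h' = h + a then Real.exp (-ε * ((N (h+a) : ℝ) + 1)) - Real.exp (-ε * (N (h+a) : ℝ)) else 0) := by
    intro h' _
    have hdef : binUpdate N h a h' = (if h' = h ∧ 1 ≤ h then N h' - 1 else N h') + (if h' = h + a then 1 else 0) := rfl
    by_cases hh' : h' = h
    · have hupd : binUpdate N h a h' = N h - 1 := by
        rw [hdef, if_pos ⟨hh', hh1⟩, if_neg (by omega : ¬ h' = h + a), hh']; omega
      rw [hupd, if_pos hh', if_neg (by omega : ¬ h' = h + a)]
      have hcast : ((N h - 1 : ℕ) : ℝ) = (N h : ℝ) - 1 := by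
        push_cast [Nat.cast_sub hNh]; ring
      rw [hcast, hh']; ring
    · by_cases hh2 : h' = h + a
      · have hupd : binUpdate N h a h' = N (h+a) + 1 := by
          rw [hdef, if_neg (by tauto), if_pos hh2, hh2]
        rw [hupd, if_neg hh', if_pos hh2, hh2]
        push_cast; ring_nf
      · have hupd : binUpdate N h a h' = N h' := by
          rw [hdef, if_neg (by tauto), if_neg hh2]; omega
        rw [hupd, if_neg hh', if_neg hh2]
        ring
  unfold Phi
  rw [Finset.sum_congr rfl key, Finset.sum_add_distrib, Finset.sum_add_distrib,
    Finset.sum_ite_eq' _ h, Finset.sum_ite_eq' _ (h+a), if_pos hmemh]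
  have hmem2 : (h + a ∈ Finset.Icc 1 (B-1)) ↔ (h + a ≤ B - 1) := by
    rw [Finset.mem_Icc]; omega
  unfold lam wgt
  rw [mul_add, mul_add]
  congr 1
  · congr 1
    have he : Real.exp (-ε * ((N h : ℝ) - 1)) = Real.exp (-ε * (N h : ℝ)) * Real.exp ε := by
      rw [← Real.exp_add]; ring_nf
    rw [he]; ring
  · by_cases hc : h + a ≤ B - 1
    · rw [if_pos (hmem2.2 hc), if_pos hc]
      have he : Real.exp (-ε * ((N (h+a) : ℝ) + 1)) = Real.exp (-ε * (N (h+a) : ℝ)) * Real.exp (-ε) := by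
        rw [← Real.exp_add]; ring_nf
      rw [he]; ring
    · rw [if_neg (fun hm => hc (hmem2.1 hm)), if_neg hc, mul_zero, neg_zero]

end PDE


namespace PDE
open Real Finset

instance (B : ℕ) (N : ℕ → ℕ) (a : ℕ) : DecidablePred (expFeasible B N a) :=
  fun h => decidable_of_iff (h = 0 ∨ (1 ≤ h ∧ h ≤ B - a ∧ 0 < N h)) Iff.rfl

lemma feasSet_nonempty (B : ℕ) (N : ℕ → ℕ) (a : ℕ) :
    ((Finset.range (B + 1)).filter (fun h => expFeasible B N a h)).Nonempty :=
  ⟨0, Finset.mem_filter.2 ⟨Finset.mem_range.2 (by omega), Or.inl rfl⟩⟩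

noncomputable def mval (B : ℕ) (ε : ℝ) (N : ℕ → ℕ) (a : ℕ) : ℝ :=
  ((Finset.range (B + 1)).filter (fun h => expFeasible B N a h)).inf'
    (feasSet_nonempty B N a) (expObj B ε N a)

lemma mval_le {B : ℕ} {ε : ℝ} {N : ℕ → ℕ} {a h : ℕ} (hfeas : expFeasible B N a h) :
    mval B ε N a ≤ expObj B ε N a h := by
  refine Finset.inf'_le _ (Finset.mem_filter.2 ⟨Finset.mem_range.2 ?_, hfeas⟩)
  rcases hfeas with h0 | ⟨_, hle, _⟩ <;> omega

lemma mval_exists (B : ℕ) (ε : ℝ) (N : ℕ → ℕ) (a : ℕ) :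
    ∃ h, expFeasible B N a h ∧ mval B ε N a = expObj B ε N a h := by
  obtain ⟨h, hmem, heq⟩ := Finset.exists_mem_eq_inf'
    (feasSet_nonempty B N a) (expObj B ε N a)
  exact ⟨h, (Finset.mem_filter.1 hmem).2, heq⟩

variable {B : ℕ} {ε : ℝ} {N : ℕ → ℕ}

lemma mval_le_open (hε : 0 < ε) {a : ℕ} (h1 : 1 ≤ a) (h2 : a ≤ B - 1) :
    mval B ε N a ≤ (B:ℝ) - a + Phi B ε N - wgt B ε N a := by
  have := mval_le (B := B) (ε := ε) (N := N) (a := a) (h := 0) (Or.inl rfl)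
  rw [expObj_def, Phi_update_zero a h1 h2] at this
  norm_num at this
  linarith

lemma mval_le_fill (hε : 0 < ε) {a h : ℕ} (ha1 : 1 ≤ a) (hh1 : 1 ≤ h)
    (hha : h + a ≤ B) (hNh : 1 ≤ N h) :
    mval B ε N a ≤ -(a:ℝ) + Phi B ε N + lam B ε N h
      - (if h + a ≤ B - 1 then wgt B ε N (h+a) else 0) := by
  have hfeas : expFeasible B N a h := Or.inr ⟨hh1, by omega, hNh⟩
  have := mval_le (B := B) (ε := ε) (N := N) (a := a) (h := h) hfeas
  rw [expObj_def, Phi_update_pos a h ha1 hh1 hha hNh, if_neg (by omega : ¬ h = 0)] at this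
  calc mval B ε N a ≤ (B:ℝ) * 0 - a + (Phi B ε N + lam B ε N h
      - (if h + a ≤ B - 1 then wgt B ε N (h+a) else 0)) := this
    _ = -(a:ℝ) + Phi B ε N + lam B ε N h
      - (if h + a ≤ B - 1 then wgt B ε N (h+a) else 0) := by ring

lemma ite_wgt_nonneg (hε : 0 < ε) (c : Prop) [Decidable c] (l : ℕ) :
    0 ≤ (if c then wgt B ε N l else 0) := by
  split_ifs
  · exact wgt_nonneg hε l
  · exact le_refl 0

lemma chainAux {ι : Type} [DecidableEq ι] (hε : 0 < ε) (a : ι → ℕ) (I : Finset ι) :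
    ∀ (l : ℕ), (∀ i ∈ I, 1 ≤ a i ∧ a i < B) → 1 ≤ l → l + ∑ i ∈ I, a i ≤ B →
    ∑ i ∈ I, (mval B ε N (a i) + (a i : ℝ) - Phi B ε N)
      ≤ wgt B ε N l + (I.card : ℝ) * Dslack B ε := by
  induction I using Finset.induction_on with
  | empty =>
    intro l _ _ _
    simp only [Finset.sum_empty, Finset.card_empty, Nat.cast_zero, zero_mul, add_zero]
    exact wgt_nonneg hε l
  | @insert x I' hx ih =>
    intro l hcond h1l hsum
    have hax : 1 ≤ a x ∧ a x < B := hcond x (Finset.mem_insert_self _ _)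
    rw [Finset.sum_insert hx] at hsum ⊢
    rw [Finset.card_insert_of_notMem hx]
    have hcond' : ∀ i ∈ I', 1 ≤ a i ∧ a i < B := fun i hi => hcond i (Finset.mem_insert_of_mem hi)
    push_cast
    rcases Nat.lt_or_ge (N l) 1 with hNl | hNl
    · -- N l = 0
      have hNl0 : N l = 0 := by omega
      have hm0 : mval B ε N (a x) ≤ (B:ℝ) - a x + Phi B ε N - wgt B ε N (a x) :=
        mval_le_open hε hax.1 (by omega)
      rcases I'.eq_empty_or_nonempty with hI' | ⟨y, hy⟩
      · subst hI'
        simp only [Finset.sum_empty, Finset.card_empty, Nat.cast_zero, add_zero, zero_mul]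
        have hb := B_le_Mbar_add (B := B) hε
        have hw := wgt_nonneg (B := B) (N := N) hε (a x)
        rw [wgt_of_zero l hNl0]
        linarith
      · have hih := ih (a x) hcond' hax.1 (by omega)
        have hb := B_le_Mbar_add (B := B) hε
        rw [wgt_of_zero l hNl0]
        have hD : 0 ≤ Dslack B ε := Dslack_nonneg hε
        linarith
    · -- N l ≥ 1
      have hml := mval_le_fill (B := B) (ε := ε) (N := N) hε hax.1 h1l
        (show l + a x ≤ B by omega) hNl
      have hlw := lam_le_wgt_add (B := B) (N := N) hε l hNl
      rcases I'.eq_empty_or_nonempty with hI' | ⟨y, hy⟩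
      · subst hI'
        simp only [Finset.sum_empty, Finset.card_empty, Nat.cast_zero, add_zero, zero_mul]
        have hite := ite_wgt_nonneg (B := B) (N := N) hε (l + a x ≤ B - 1) (l + a x)
        linarith
      · have hge1 : 1 ≤ ∑ i ∈ I', a i :=
          le_trans (hcond' y hy).1 (Finset.single_le_sum (fun i _ => Nat.zero_le _) hy)
        have hcase : l + a x ≤ B - 1 := by omega
        rw [if_pos hcase] at hml
        have hih := ih (l + a x) hcond' (by omega) (by omega)
        have hD : 0 ≤ Dslack B ε := Dslack_nonneg hε
        linarith

lemma binChain {ι : Type} [DecidableEq ι] (hε : 0 < ε) (a : ι → ℕ) (I : Finset ι)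
    (hne : I.Nonempty) (hcond : ∀ i ∈ I, 1 ≤ a i ∧ a i < B) (hsum : ∑ i ∈ I, a i ≤ B) :
    ∑ i ∈ I, (mval B ε N (a i) + (a i : ℝ) - Phi B ε N)
      ≤ (B : ℝ) + (I.card : ℝ) * Dslack B ε := by
  obtain ⟨x, hx⟩ := hne
  have hrw : I = insert x (I.erase x) := (Finset.insert_erase hx).symm
  rw [hrw, Finset.sum_insert (Finset.notMem_erase x I),
    Finset.card_insert_of_notMem (Finset.notMem_erase x I)]
  rw [hrw, Finset.sum_insert (Finset.notMem_erase x I)] at hsum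
  have hax := hcond x hx
  have hcond' : ∀ i ∈ I.erase x, 1 ≤ a i ∧ a i < B :=
    fun i hi => hcond i (Finset.mem_of_mem_erase hi)
  have hm0 : mval B ε N (a x) ≤ (B:ℝ) - a x + Phi B ε N - wgt B ε N (a x) :=
    mval_le_open hε hax.1 (by omega)
  have hD : 0 ≤ Dslack B ε := Dslack_nonneg hε
  rcases (I.erase x).eq_empty_or_nonempty with hI' | hne'
  · rw [hI']
    simp only [Finset.sum_empty, Finset.card_empty, Nat.cast_zero, add_zero]
    have hw := wgt_nonneg (B := B) (N := N) hε (a x)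
    push_cast
    linarith
  · have hih := chainAux (N := N) hε a (I.erase x) (a x) hcond' hax.1 hsum
    push_cast
    linarith

end PDE


namespace PDE
open Real Finset

lemma seqSizes_eq {n J : ℕ} (s : Fin J → ℕ) (σ : Fin n → Fin J) (i : Fin n) :
    seqSizes n s σ (i : ℕ) = s (σ i) := by
  simp [seqSizes, i.isLt]

lemma optWaste_spec {B n J : ℕ} (s : Fin J → ℕ) (hs2 : ∀ j, s j < B) (σ : Fin n → Fin J) :
    ∃ f : Fin n → Fin n,
      (∀ b : Fin n, ∑ i ∈ Finset.univ.filter (fun i => f i = b), seqSizes n s σ i ≤ B) ∧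
      (optWaste B n (seqSizes n s σ)) + ∑ i : Fin n, seqSizes n s σ i
        = B * (Finset.univ.image f).card := by
  classical
  set sz := seqSizes n s σ with hsz
  have hne : { w : ℕ | ∃ f : Fin n → Fin n,
      (∀ b : Fin n, ∑ i ∈ Finset.univ.filter (fun i => f i = b), sz i ≤ B) ∧
      w + ∑ i : Fin n, sz i = B * (Finset.univ.image f).card }.Nonempty := by
    have hle : ∀ i : Fin n, sz (i : ℕ) ≤ B := by
      intro i
      rw [hsz, seqSizes_eq s σ i]
      exact (hs2 (σ i)).le
    refine ⟨B * n - ∑ i : Fin n, sz i, id, fun b => ?_, ?_⟩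
    · have heq : Finset.univ.filter (fun i : Fin n => id i = b) = {b} := by
        ext i; simp [Function.id_def]
      rw [heq, Finset.sum_singleton]
      exact hle b
    · have hsum : ∑ i : Fin n, sz (i:ℕ) ≤ B * n := by
        calc ∑ i : Fin n, sz (i:ℕ) ≤ ∑ _i : Fin n, B := Finset.sum_le_sum (fun i _ => hle i)
          _ = B * n := by rw [Finset.sum_const, Finset.card_univ, Fintype.card_fin, smul_eq_mul, mul_comm]
      rw [Nat.sub_add_cancel hsum, Finset.image_id, Finset.card_univ, Fintype.card_fin]
  have hmem := Nat.sInf_mem hne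
  exact hmem

end PDE


namespace PDE
open Real Finset

lemma packBound {B n J : ℕ} {ε : ℝ} {N : ℕ → ℕ} (hε : 0 < ε)
    (s : Fin J → ℕ) (hs1 : ∀ j, 1 ≤ s j) (hs2 : ∀ j, s j < B) (σ : Fin n → Fin J) :
    ∑ i : Fin n, (mval B ε N (s (σ i)) + ((s (σ i) : ℝ)) - Phi B ε N)
      ≤ (optWaste B n (seqSizes n s σ) : ℝ) + (∑ i : Fin n, (s (σ i) : ℝ))
        + (n : ℝ) * Dslack B ε := by
  classical
  obtain ⟨f, hload, heq⟩ := optWaste_spec s hs2 σ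
  set G : Fin n → ℝ := fun i => mval B ε N (s (σ i)) + ((s (σ i) : ℝ)) - Phi B ε N with hG
  set T := Finset.univ.image f with hT
  have hmaps : ∀ x ∈ (Finset.univ : Finset (Fin n)), f x ∈ T :=
    fun x _ => Finset.mem_image_of_mem f (Finset.mem_univ x)
  have hfib : ∑ i : Fin n, G i
      = ∑ b ∈ T, ∑ i ∈ Finset.univ.filter (fun i => f i = b), G i :=
    (Finset.sum_fiberwise_of_maps_to hmaps G).symm
  have hcards : (Finset.univ : Finset (Fin n)).card
      = ∑ b ∈ T, (Finset.univ.filter (fun i => f i = b)).card :=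
    Finset.card_eq_sum_card_fiberwise hmaps
  have hbin : ∀ b ∈ T, ∑ i ∈ Finset.univ.filter (fun i => f i = b), G i
      ≤ (B : ℝ) + ((Finset.univ.filter (fun i => f i = b)).card : ℝ) * Dslack B ε := by
    intro b hb
    obtain ⟨i0, _, hi0⟩ := Finset.mem_image.1 hb
    refine binChain hε (fun i => s (σ i)) _ ⟨i0, Finset.mem_filter.2 ⟨Finset.mem_univ _, hi0⟩⟩
      (fun i _ => ⟨hs1 (σ i), hs2 (σ i)⟩) ?_
    have := hload b
    calc ∑ i ∈ Finset.univ.filter (fun i => f i = b), s (σ i)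
        = ∑ i ∈ Finset.univ.filter (fun i => f i = b), seqSizes n s σ i :=
          Finset.sum_congr rfl (fun i _ => (seqSizes_eq s σ i).symm)
      _ ≤ B := hload b
  have hsum2 : ∑ i : Fin n, G i ≤ (B:ℝ) * (T.card : ℝ) + (n : ℝ) * Dslack B ε := by
    rw [hfib]
    calc ∑ b ∈ T, ∑ i ∈ Finset.univ.filter (fun i => f i = b), G i
        ≤ ∑ b ∈ T, ((B : ℝ) + ((Finset.univ.filter (fun i => f i = b)).card : ℝ) * Dslack B ε) :=
          Finset.sum_le_sum hbin
      _ = (B:ℝ) * (T.card : ℝ)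
          + (∑ b ∈ T, ((Finset.univ.filter (fun i => f i = b)).card : ℝ)) * Dslack B ε := by
          rw [Finset.sum_add_distrib, Finset.sum_const, Finset.sum_mul]
          ring
      _ = (B:ℝ) * (T.card : ℝ) + (n : ℝ) * Dslack B ε := by
          congr 2
          have : ((Finset.univ : Finset (Fin n)).card : ℝ)
              = ∑ b ∈ T, ((Finset.univ.filter (fun i => f i = b)).card : ℝ) := by
            rw [hcards]; push_cast; rfl
          rw [← this, Finset.card_univ, Fintype.card_fin]
  have hBT : (B:ℝ) * (T.card : ℝ)
      = (optWaste B n (seqSizes n s σ) : ℝ) + ∑ i : Fin n, (s (σ i) : ℝ) := by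
    have : ((optWaste B n (seqSizes n s σ) + ∑ i : Fin n, seqSizes n s σ i : ℕ) : ℝ)
        = ((B * T.card : ℕ) : ℝ) := by rw [heq]
    push_cast at this
    rw [← this]
    congr 1
    exact Finset.sum_congr rfl (fun i _ => by rw [seqSizes_eq s σ i])
  linarith [hsum2]

end PDE


namespace PDE
open Real Finset

lemma exp_slope {x y : ℝ} (hx : 0 ≤ x) (hxy : x ≤ y) :
    x * (1 - Real.exp (-y)) ≤ y * (1 - Real.exp (-x)) := by
  set d := y - x with hd
  have hd0 : 0 ≤ d := by rw [hd]; linarith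
  have h1 : x * Real.exp (-x) ≤ 1 - Real.exp (-x) := by
    have h := Real.add_one_le_exp x
    have hp := Real.exp_pos (-x)
    have hmul : Real.exp x * Real.exp (-x) = 1 := by rw [← Real.exp_add]; norm_num
    nlinarith
  have h2 : 1 - Real.exp (-d) ≤ d := by
    have := Real.add_one_le_exp (-d); linarith
  have h3 : 0 ≤ 1 - Real.exp (-d) := by
    have : Real.exp (-d) ≤ 1 := by rw [Real.exp_le_one_iff]; linarith
    linarith
  have h4 : 0 ≤ 1 - Real.exp (-x) := by
    have : Real.exp (-x) ≤ 1 := by rw [Real.exp_le_one_iff]; linarith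
    linarith
  have hsplit : Real.exp (-y) = Real.exp (-x) * Real.exp (-d) := by
    rw [← Real.exp_add]; congr 1; rw [hd]; ring
  have hA : x * Real.exp (-x) * (1 - Real.exp (-d)) ≤ (1 - Real.exp (-x)) * (1 - Real.exp (-d)) :=
    mul_le_mul_of_nonneg_right h1 h3
  have hB : (1 - Real.exp (-x)) * (1 - Real.exp (-d)) ≤ (1 - Real.exp (-x)) * d :=
    mul_le_mul_of_nonneg_left h2 h4
  nlinarith [hA, hB]

lemma level_shift {ε' ε'' : ℝ} (h1 : 0 < ε') (h2 : ε' ≤ ε'') (m : ℕ) :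
    Real.exp (-ε' * (m:ℝ)) / ε' - Real.exp (-ε'' * (m:ℝ)) / ε'' ≤ 1 / ε' - 1 / ε'' := by
  have h1' : 0 < ε'' := lt_of_lt_of_le h1 h2
  have key : ε' * (1 - Real.exp (-(ε'' * (m:ℝ)))) ≤ ε'' * (1 - Real.exp (-(ε' * (m:ℝ)))) := by
    rcases Nat.eq_zero_or_pos m with hm | hm
    · subst hm; norm_num
    · have hmpos : (0:ℝ) < (m:ℝ) := by exact_mod_cast hm
      have hs := exp_slope (x := ε' * (m:ℝ)) (y := ε'' * (m:ℝ))
        (by positivity) (by nlinarith)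
      -- hs : ε'm (1 - e^{-ε''m}) ≤ ε''m (1 - e^{-ε'm})
      nlinarith [hs]
  have hgoal : (1 - Real.exp (-ε'' * (m:ℝ))) / ε'' ≤ (1 - Real.exp (-ε' * (m:ℝ))) / ε' := by
    rw [div_le_div_iff₀ h1' h1]
    have e1 : -ε'' * (m:ℝ) = -(ε'' * (m:ℝ)) := by ring
    have e2 : -ε' * (m:ℝ) = -(ε' * (m:ℝ)) := by ring
    rw [e1, e2]
    nlinarith [key]
  rw [sub_div, sub_div] at hgoal
  have e3 : (ε'':ℝ) / ε'' = 1 := div_self (ne_of_gt h1')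
  have e4 : (ε':ℝ) / ε' = 1 := div_self (ne_of_gt h1)
  rw [one_div, one_div]
  have i1 : (1:ℝ)/ε'' = ε''⁻¹ := one_div ε''
  have i2 : (1:ℝ)/ε' = ε'⁻¹ := one_div ε'
  rw [i1, i2] at hgoal
  linarith

lemma Phi_eq_sum (B : ℕ) (ε : ℝ) (N : ℕ → ℕ) :
    Phi B ε N = ∑ h ∈ Finset.Icc 1 (B-1), (B:ℝ) * (Real.exp (-ε * (N h : ℝ)) / ε) := by
  rw [Phi, Finset.mul_sum]
  exact Finset.sum_congr rfl (fun h _ => by ring)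

lemma Phi_eps_shift {B : ℕ} {N : ℕ → ℕ} {ε' ε'' : ℝ} (h1 : 0 < ε') (h2 : ε' ≤ ε'') :
    Phi B ε' N ≤ Phi B ε'' N + (B:ℝ) * ((B-1:ℕ):ℝ) * (1/ε' - 1/ε'') := by
  have key : Phi B ε' N - Phi B ε'' N ≤ (B:ℝ) * ((B-1:ℕ):ℝ) * (1/ε' - 1/ε'') := by
    rw [Phi_eq_sum, Phi_eq_sum, ← Finset.sum_sub_distrib]
    have hbd : ∀ h ∈ Finset.Icc 1 (B-1),
        (B:ℝ) * (Real.exp (-ε' * (N h : ℝ)) / ε') - (B:ℝ) * (Real.exp (-ε'' * (N h : ℝ)) / ε'')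
          ≤ (B:ℝ) * (1/ε' - 1/ε'') := by
      intro h _
      have := level_shift h1 h2 (N h)
      have hB : (0:ℝ) ≤ (B:ℝ) := Nat.cast_nonneg B
      nlinarith
    calc ∑ h ∈ Finset.Icc 1 (B-1), ((B:ℝ) * (Real.exp (-ε' * (N h : ℝ)) / ε')
          - (B:ℝ) * (Real.exp (-ε'' * (N h : ℝ)) / ε''))
        ≤ ∑ _h ∈ Finset.Icc 1 (B-1), (B:ℝ) * (1/ε' - 1/ε'') := Finset.sum_le_sum hbd
      _ = (B:ℝ) * ((B-1:ℕ):ℝ) * (1/ε' - 1/ε'') := by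
          rw [Finset.sum_const, Nat.card_Icc]
          have hc : B - 1 + 1 - 1 = B - 1 := by omega
          rw [hc]
          simp only [nsmul_eq_mul]
          ring_nf
  linarith

lemma Phi_zero_state (B : ℕ) (ε : ℝ) :
    Phi B ε (fun _ => 0) = (B:ℝ) * ((B-1:ℕ):ℝ) * (1/ε) := by
  rw [Phi]
  simp only [Nat.cast_zero, mul_zero, Real.exp_zero]
  rw [Finset.sum_const, Nat.card_Icc]
  have hc : B - 1 + 1 - 1 = B - 1 := by omega
  rw [hc]
  simp only [nsmul_eq_mul, mul_one]
  ring_nf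

lemma Phi_nonneg {B : ℕ} {ε : ℝ} (hε : 0 < ε) (N : ℕ → ℕ) : 0 ≤ Phi B ε N := by
  rw [Phi]
  have : (0:ℝ) ≤ (B:ℝ)/ε := by positivity
  refine mul_nonneg this (Finset.sum_nonneg (fun h _ => (Real.exp_pos _).le))

lemma levelsum_update {B : ℕ} {N : ℕ → ℕ} {a h0 : ℕ} (ha1 : 1 ≤ a) (haB : a < B)
    (hfeas : expFeasible B N a h0) :
    ∑ h ∈ Finset.Icc 1 B, binUpdate N h0 a h
      = (∑ h ∈ Finset.Icc 1 B, N h) + (if h0 = 0 then 1 else 0) := by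
  rcases hfeas with h0eq | ⟨hh1, hle, hpos⟩
  · subst h0eq
    have hper : ∀ h ∈ Finset.Icc 1 B, binUpdate N 0 a h = N h + (if h = a then 1 else 0) := by
      intro h _
      show (if h = 0 ∧ 1 ≤ 0 then N h - 1 else N h) + (if h = 0 + a then 1 else 0)
          = N h + (if h = a then 1 else 0)
      rw [if_neg (by omega), Nat.zero_add]
    rw [Finset.sum_congr rfl hper, Finset.sum_add_distrib, Finset.sum_ite_eq' _ a,
      if_pos (Finset.mem_Icc.2 ⟨ha1, by omega⟩), if_pos rfl]
  · have hmem0 : h0 ∈ Finset.Icc 1 B := Finset.mem_Icc.2 ⟨hh1, by omega⟩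
    have hmem1 : h0 + a ∈ Finset.Icc 1 B := Finset.mem_Icc.2 ⟨by omega, by omega⟩
    have hper : ∀ h ∈ Finset.Icc 1 B,
        binUpdate N h0 a h + (if h = h0 then 1 else 0)
          = N h + (if h = h0 + a then 1 else 0) := by
      intro h _
      show ((if h = h0 ∧ 1 ≤ h0 then N h - 1 else N h) + (if h = h0 + a then 1 else 0))
          + (if h = h0 then 1 else 0) = N h + (if h = h0 + a then 1 else 0)
      by_cases hh : h = h0
      · rw [if_pos ⟨hh, hh1⟩, if_pos hh, if_neg (by omega)]
        subst hh
        omega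
      · rw [if_neg (by tauto), if_neg hh]
        omega
    have hsums : ∑ h ∈ Finset.Icc 1 B, (binUpdate N h0 a h + (if h = h0 then 1 else 0))
        = ∑ h ∈ Finset.Icc 1 B, (N h + (if h = h0 + a then 1 else 0)) :=
      Finset.sum_congr rfl hper
    rw [Finset.sum_add_distrib, Finset.sum_add_distrib, Finset.sum_ite_eq' _ h0,
      Finset.sum_ite_eq' _ (h0 + a), if_pos hmem0, if_pos hmem1] at hsums
    rw [if_neg (by omega : ¬ h0 = 0)]
    omega

end PDE


namespace PDE
open Real Finset

noncomputable def eps (B t : ℕ) : ℝ := Real.sqrt ((B:ℝ) / (2 * ((B:ℝ) + (t:ℝ) + 1)))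

lemma eps_pos {B : ℕ} (hB : 1 ≤ B) (t : ℕ) : 0 < eps B t := by
  have hB' : (1:ℝ) ≤ (B:ℝ) := by exact_mod_cast hB
  rw [eps]
  apply Real.sqrt_pos.2
  positivity

lemma eps_anti {B : ℕ} {t t' : ℕ} (h : t ≤ t') : eps B t' ≤ eps B t := by
  have h' : (t:ℝ) ≤ (t':ℝ) := by exact_mod_cast h
  apply Real.sqrt_le_sqrt
  gcongr


lemma inv_eps {B : ℕ} (hB : 1 ≤ B) (t : ℕ) :
    1 / eps B t = Real.sqrt ((2 * ((B:ℝ) + (t:ℝ) + 1)) / B) := by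
  have hB' : (1:ℝ) ≤ (B:ℝ) := by exact_mod_cast hB
  rw [eps, one_div, ← Real.sqrt_inv]
  congr 1
  rw [inv_div]

lemma sqrt_inv_le {u : ℝ} (hu : 0 ≤ u) :
    1 / Real.sqrt (u + 1) ≤ 2 * (Real.sqrt (u + 1) - Real.sqrt u) := by
  set x := Real.sqrt u with hx
  set y := Real.sqrt (u+1) with hy
  have hx0 : 0 ≤ x := Real.sqrt_nonneg u
  have hy0 : 0 < y := Real.sqrt_pos.2 (by linarith)
  have hx2 : x^2 = u := Real.sq_sqrt hu
  have hy2 : y^2 = u + 1 := Real.sq_sqrt (by linarith)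
  rw [div_le_iff₀ hy0]
  nlinarith [sq_nonneg (x - y)]

lemma final_arith (B n : ℕ) (hB : 1 ≤ B) (hn : 1 ≤ n) :
    (B:ℝ) * ((B-1:ℕ):ℝ) * (1 / eps B (n-1)) + ∑ t ∈ Finset.range n, (B:ℝ) * eps B t
      ≤ Real.sqrt (8 * (B:ℝ)^3 * ((n:ℝ) + (B:ℝ))) := by
  have hB' : (1:ℝ) ≤ (B:ℝ) := by exact_mod_cast hB
  have hn' : (1:ℝ) ≤ (n:ℝ) := by exact_mod_cast hn
  have hBpos : (0:ℝ) < (B:ℝ) := by linarith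
  -- Part A
  have hA : (B:ℝ) * ((B-1:ℕ):ℝ) * (1 / eps B (n-1))
      ≤ Real.sqrt (2 * (B:ℝ)^3 * ((B:ℝ) + (n:ℝ))) := by
    rw [inv_eps hB]
    have hcast : ((n-1:ℕ):ℝ) = (n:ℝ) - 1 := by
      rw [Nat.cast_sub hn]; norm_num
    rw [hcast]
    have harg : 2 * ((B:ℝ) + ((n:ℝ)-1) + 1) / (B:ℝ) = 2 * ((B:ℝ) + (n:ℝ)) / (B:ℝ) := by ring_nf
    rw [harg]
    have h1 : ((B-1:ℕ):ℝ) ≤ (B:ℝ) := by exact_mod_cast Nat.sub_le B 1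
    have h1' : (0:ℝ) ≤ ((B-1:ℕ):ℝ) := Nat.cast_nonneg _
    have hs : (0:ℝ) ≤ Real.sqrt (2 * ((B:ℝ) + (n:ℝ)) / (B:ℝ)) := Real.sqrt_nonneg _
    calc (B:ℝ) * ((B-1:ℕ):ℝ) * Real.sqrt (2 * ((B:ℝ) + (n:ℝ)) / (B:ℝ))
        ≤ (B:ℝ) * (B:ℝ) * Real.sqrt (2 * ((B:ℝ) + (n:ℝ)) / (B:ℝ)) := by
          refine mul_le_mul_of_nonneg_right ?_ hs
          nlinarith
      _ = Real.sqrt (((B:ℝ)*(B:ℝ))^2) * Real.sqrt (2 * ((B:ℝ) + (n:ℝ)) / (B:ℝ)) := by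
          rw [Real.sqrt_sq (by positivity)]
      _ = Real.sqrt (((B:ℝ)*(B:ℝ))^2 * (2 * ((B:ℝ) + (n:ℝ)) / (B:ℝ))) := by
          rw [← Real.sqrt_mul (by positivity)]
      _ = Real.sqrt (2 * (B:ℝ)^3 * ((B:ℝ) + (n:ℝ))) := by
          congr 1; field_simp
  -- Part B
  have hB2 : ∑ t ∈ Finset.range n, (B:ℝ) * eps B t
      ≤ Real.sqrt (2 * (B:ℝ)^3 * ((B:ℝ) + (n:ℝ))) := by
    have hper : ∀ t ∈ Finset.range n, (B:ℝ) * eps B t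
        ≤ (B:ℝ) * Real.sqrt ((B:ℝ)/2)
            * (2 * (Real.sqrt ((B:ℝ) + ((t:ℝ)+1)) - Real.sqrt ((B:ℝ) + (t:ℝ)))) := by
      intro t _
      have hepseq : eps B t = Real.sqrt ((B:ℝ)/2) * (1 / Real.sqrt ((B:ℝ) + (t:ℝ) + 1)) := by
        rw [eps, show (B:ℝ) / (2 * ((B:ℝ) + (t:ℝ) + 1))
            = ((B:ℝ)/2) * (1/((B:ℝ) + (t:ℝ) + 1)) by field_simp,
          Real.sqrt_mul (by positivity), one_div, Real.sqrt_inv, one_div]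
      have hkey : 1 / Real.sqrt ((B:ℝ) + (t:ℝ) + 1)
          ≤ 2 * (Real.sqrt ((B:ℝ) + (t:ℝ) + 1) - Real.sqrt ((B:ℝ) + (t:ℝ))) := by
        have := sqrt_inv_le (u := (B:ℝ) + (t:ℝ)) (by positivity)
        convert this using 3 <;> ring_nf
      rw [hepseq]
      have hfac : (0:ℝ) ≤ (B:ℝ) * Real.sqrt ((B:ℝ)/2) := by positivity
      calc (B:ℝ) * (Real.sqrt ((B:ℝ)/2) * (1 / Real.sqrt ((B:ℝ) + (t:ℝ) + 1)))
          = (B:ℝ) * Real.sqrt ((B:ℝ)/2) * (1 / Real.sqrt ((B:ℝ) + (t:ℝ) + 1)) := by ring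
        _ ≤ (B:ℝ) * Real.sqrt ((B:ℝ)/2)
            * (2 * (Real.sqrt ((B:ℝ) + (t:ℝ) + 1) - Real.sqrt ((B:ℝ) + (t:ℝ)))) := by
            refine mul_le_mul_of_nonneg_left ?_ hfac
            convert hkey using 3 <;> ring_nf
        _ = (B:ℝ) * Real.sqrt ((B:ℝ)/2)
            * (2 * (Real.sqrt ((B:ℝ) + ((t:ℝ)+1)) - Real.sqrt ((B:ℝ) + (t:ℝ)))) := by ring_nf
    have htel : ∑ t ∈ Finset.range n,
        (Real.sqrt ((B:ℝ) + ((t:ℝ)+1)) - Real.sqrt ((B:ℝ) + (t:ℝ)))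
        = Real.sqrt ((B:ℝ) + (n:ℝ)) - Real.sqrt ((B:ℝ)) := by
      have := Finset.sum_range_sub (f := fun t : ℕ => Real.sqrt ((B:ℝ) + (t:ℝ))) n
      simp only [Nat.cast_add, Nat.cast_one] at this
      have h0 : Real.sqrt ((B:ℝ) + ((0:ℕ):ℝ)) = Real.sqrt (B:ℝ) := by norm_num
      rw [← h0]
      exact this
    calc ∑ t ∈ Finset.range n, (B:ℝ) * eps B t
        ≤ ∑ t ∈ Finset.range n, (B:ℝ) * Real.sqrt ((B:ℝ)/2)
            * (2 * (Real.sqrt ((B:ℝ) + ((t:ℝ)+1)) - Real.sqrt ((B:ℝ) + (t:ℝ)))) :=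
          Finset.sum_le_sum hper
      _ = ((B:ℝ) * Real.sqrt ((B:ℝ)/2) * 2)
            * ∑ t ∈ Finset.range n, (Real.sqrt ((B:ℝ) + ((t:ℝ)+1)) - Real.sqrt ((B:ℝ) + (t:ℝ))) := by
          rw [Finset.mul_sum]
          exact Finset.sum_congr rfl (fun t _ => by ring)
      _ = (B:ℝ) * Real.sqrt ((B:ℝ)/2) * 2 * (Real.sqrt ((B:ℝ) + (n:ℝ)) - Real.sqrt (B:ℝ)) := by
          rw [htel]
      _ ≤ (B:ℝ) * Real.sqrt ((B:ℝ)/2) * 2 * Real.sqrt ((B:ℝ) + (n:ℝ)) := by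
          have h0 : (0:ℝ) ≤ (B:ℝ) * Real.sqrt ((B:ℝ)/2) * 2 := by positivity
          have h1 : (0:ℝ) ≤ Real.sqrt (B:ℝ) := Real.sqrt_nonneg _
          nlinarith [Real.sqrt_nonneg ((B:ℝ) + (n:ℝ))]
      _ = Real.sqrt (2 * (B:ℝ)^3 * ((B:ℝ) + (n:ℝ))) := by
          rw [show 2 * (B:ℝ)^3 * ((B:ℝ) + (n:ℝ)) = ((2*(B:ℝ))^2 * ((B:ℝ)/2)) * ((B:ℝ)+(n:ℝ)) by ring]
          rw [Real.sqrt_mul (by positivity), Real.sqrt_mul (by positivity),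
            Real.sqrt_sq (by positivity)]
          ring
  have heq : Real.sqrt (8 * (B:ℝ)^3 * ((n:ℝ) + (B:ℝ)))
      = 2 * Real.sqrt (2 * (B:ℝ)^3 * ((B:ℝ) + (n:ℝ))) := by
    rw [show 8 * (B:ℝ)^3 * ((n:ℝ) + (B:ℝ)) = 2^2 * (2 * (B:ℝ)^3 * ((B:ℝ) + (n:ℝ))) by ring,
      Real.sqrt_mul (by norm_num : (0:ℝ) ≤ 2^2), Real.sqrt_sq (by norm_num : (0:ℝ) ≤ 2)]
  linarith

end PDE


namespace PDE
open Real Finset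

section Context

variable {B J n : ℕ} {s : Fin J → ℕ} {place : (Fin n → Fin J) → ℕ → ℕ}

lemma seqSizes_lt {t : ℕ} (ht : t < n) (σ : Fin n → Fin J) :
    seqSizes n s σ t = s (σ ⟨t, ht⟩) := by
  simp [seqSizes, ht]

lemma state_congr
    (hadapted : ∀ σ τ : Fin n → Fin J, ∀ t : ℕ,
      (∀ i : Fin n, (i : ℕ) ≤ t → σ i = τ i) → place σ t = place τ t)
    (σ τ : Fin n → Fin J) (t : ℕ)
    (hagree : ∀ i : Fin n, (i:ℕ) < t → σ i = τ i) :
    binState (seqSizes n s σ) (place σ) t = binState (seqSizes n s τ) (place τ) t := by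
  induction t with
  | zero => rfl
  | succ t ih =>
    have hagree' : ∀ i : Fin n, (i:ℕ) < t → σ i = τ i := fun i hi => hagree i (by omega)
    have hplace : place σ t = place τ t := hadapted σ τ t (fun i hi => hagree i (by omega))
    have hsz : seqSizes n s σ t = seqSizes n s τ t := by
      unfold seqSizes
      split_ifs with ht
      · rw [hagree ⟨t, ht⟩ (by simp)]
      · rfl
    show binUpdate (binState (seqSizes n s σ) (place σ) t) (place σ t) (seqSizes n s σ t)
        = binUpdate (binState (seqSizes n s τ) (place τ) t) (place τ t) (seqSizes n s τ t)
    rw [ih hagree', hplace, hsz]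

variable (hs1 : ∀ j, 1 ≤ s j) (hs2 : ∀ j, s j < B)
  (hrun : ∀ σ : Fin n → Fin J, ∀ t < n,
      PDExpStep B (Real.sqrt ((B : ℝ) / (2 * ((B : ℝ) + (t : ℝ) + 1))))
        (binState (seqSizes n s σ) (place σ) t) (seqSizes n s σ t) (place σ t))

include hs1 hs2 hrun in
lemma levelsum_run (σ : Fin n → Fin J) :
    ∀ k, k ≤ n → ∑ h ∈ Finset.Icc 1 B, binState (seqSizes n s σ) (place σ) k h
      = ∑ t ∈ Finset.range k, (if place σ t = 0 then 1 else 0) := by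
  intro k
  induction k with
  | zero => intro _; simp [binState]
  | succ k ih =>
    intro hk
    have hkn : k < n := by omega
    rw [Finset.sum_range_succ, ← ih (by omega)]
    have hfeas := (hrun σ k hkn).1
    have ha1 : 1 ≤ seqSizes n s σ k := by rw [seqSizes_lt hkn]; exact hs1 _
    have haB : seqSizes n s σ k < B := by rw [seqSizes_lt hkn]; exact hs2 _
    exact levelsum_update ha1 haB hfeas

include hs1 hs2 hrun in
lemma waste_eq (hn : 1 ≤ n) (σ : Fin n → Fin J) :
    algWaste B n (seqSizes n s σ) (place σ)
      = ∑ t ∈ Finset.range n,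
          ((B:ℝ) * (if place σ t = 0 then 1 else 0) - (seqSizes n s σ t : ℝ)) := by
  unfold algWaste
  rw [Finset.sum_sub_distrib, ← Finset.mul_sum]
  congr 1
  have hlev := levelsum_run hs1 hs2 hrun σ n (le_refl n)
  have hcast : ∑ h ∈ Finset.Icc 1 B, ((binState (seqSizes n s σ) (place σ) n h : ℕ) : ℝ)
      = ((∑ h ∈ Finset.Icc 1 B, binState (seqSizes n s σ) (place σ) n h : ℕ) : ℝ) := by
    push_cast; rfl
  rw [hcast, hlev]
  push_cast
  rfl

include hrun in
lemma greedy_step (σ : Fin n → Fin J) (t : ℕ) (ht : t < n) :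
    (B:ℝ) * (if place σ t = 0 then 1 else 0) - (seqSizes n s σ t : ℝ)
      + Phi B (eps B t) (binState (seqSizes n s σ) (place σ) (t+1))
      ≤ mval B (eps B t) (binState (seqSizes n s σ) (place σ) t) (seqSizes n s σ t) := by
  obtain ⟨hfeas, hmin⟩ := hrun σ t ht
  obtain ⟨h', hfeas', heq⟩ :=
    mval_exists B (eps B t) (binState (seqSizes n s σ) (place σ) t) (seqSizes n s σ t)
  have hle : expObj B (eps B t) (binState (seqSizes n s σ) (place σ) t)
        (seqSizes n s σ t) (place σ t)
      ≤ expObj B (eps B t) (binState (seqSizes n s σ) (place σ) t) (seqSizes n s σ t) h' :=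
    hmin h' hfeas'
  rw [← heq] at hle
  have hLHS : (B:ℝ) * (if place σ t = 0 then 1 else 0) - (seqSizes n s σ t : ℝ)
      + Phi B (eps B t) (binState (seqSizes n s σ) (place σ) (t+1))
      = expObj B (eps B t) (binState (seqSizes n s σ) (place σ) t)
          (seqSizes n s σ t) (place σ t) := by
    rw [expObj_def]
    rfl
  rw [hLHS]
  exact hle

include hs1 hs2 hrun in
lemma pathBound (hB : 1 ≤ B) (hn : 1 ≤ n) (σ : Fin n → Fin J) :
    algWaste B n (seqSizes n s σ) (place σ)
      ≤ (B:ℝ) * ((B-1:ℕ):ℝ) * (1 / eps B (n-1))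
        + ∑ t ∈ Finset.range n,
            (mval B (eps B t) (binState (seqSizes n s σ) (place σ) t) (seqSizes n s σ t)
              - Phi B (eps B t) (binState (seqSizes n s σ) (place σ) t)) := by
  set NN : ℕ → ℕ → ℕ := fun t => binState (seqSizes n s σ) (place σ) t with hNN
  set g : ℕ → ℝ := fun t => mval B (eps B t) (NN t) (seqSizes n s σ t)
      - Phi B (eps B t) (NN t) with hg
  set c : ℕ → ℝ := fun t =>
      (B:ℝ) * (if place σ t = 0 then 1 else 0) - (seqSizes n s σ t : ℝ) with hc
  have main : ∀ k, 1 ≤ k → k ≤ n →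
      ∑ t ∈ Finset.range k, c t ≤ ∑ t ∈ Finset.range k, g t
        + (B:ℝ) * ((B-1:ℕ):ℝ) * (1 / eps B (k-1)) - Phi B (eps B (k-1)) (NN k) := by
    intro k
    induction k with
    | zero => omega
    | succ k ih =>
      intro _ hkn
      have hknlt : k < n := by omega
      have hgreedy := greedy_step hrun σ k hknlt
      rcases Nat.eq_zero_or_pos k with hk0 | hk0
      · subst hk0
        simp only [Finset.sum_range_succ, Finset.sum_range_zero, zero_add]
        have hzero : NN 0 = fun _ => 0 := rfl
        have hPhi0 : Phi B (eps B 0) (NN 0) = (B:ℝ) * ((B-1:ℕ):ℝ) * (1 / eps B 0) := by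
          rw [hzero, Phi_zero_state]
        have : c 0 + Phi B (eps B 0) (NN 1) ≤ mval B (eps B 0) (NN 0) (seqSizes n s σ 0) :=
          hgreedy
        have hgdef : g 0 = mval B (eps B 0) (NN 0) (seqSizes n s σ 0)
            - Phi B (eps B 0) (NN 0) := rfl
        rw [show (1:ℕ) - 1 = 0 from rfl]
        rw [hgdef] at *
        linarith [hPhi0]
      · have IH := ih hk0 (by omega)
        have hshift : Phi B (eps B k) (NN k) ≤ Phi B (eps B (k-1)) (NN k)
            + (B:ℝ) * ((B-1:ℕ):ℝ) * (1 / eps B k - 1 / eps B (k-1)) :=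
          Phi_eps_shift (eps_pos hB k) (eps_anti (by omega))
        rw [Finset.sum_range_succ, Finset.sum_range_succ (f := g)]
        have hgreedy' : c k + Phi B (eps B k) (NN (k+1))
            ≤ mval B (eps B k) (NN k) (seqSizes n s σ k) := hgreedy
        have hstep : c k ≤ g k + Phi B (eps B k) (NN k) - Phi B (eps B k) (NN (k+1)) := by
          have hgdef : g k = mval B (eps B k) (NN k) (seqSizes n s σ k)
              - Phi B (eps B k) (NN k) := rfl
          rw [hgdef]
          linarith [hgreedy']
        rw [show (k+1) - 1 = k from rfl]
        linarith
  have hfin := main n hn (le_refl n)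
  have hPhin : 0 ≤ Phi B (eps B (n-1)) (NN n) := Phi_nonneg (eps_pos hB (n-1)) _
  rw [waste_eq hs1 hs2 hrun hn σ]
  calc ∑ t ∈ Finset.range n, ((B:ℝ) * (if place σ t = 0 then 1 else 0) - (seqSizes n s σ t : ℝ))
      = ∑ t ∈ Finset.range n, c t := rfl
    _ ≤ ∑ t ∈ Finset.range n, g t + (B:ℝ) * ((B-1:ℕ):ℝ) * (1 / eps B (n-1)) := by linarith
    _ = (B:ℝ) * ((B-1:ℕ):ℝ) * (1 / eps B (n-1)) + ∑ t ∈ Finset.range n, g t := by ring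

end Context
end PDE


namespace PDE
open Real Finset

lemma Wsum {n J : ℕ} (p : Fin J → ℝ) (hp_sum : ∑ j, p j = 1) :
    ∑ σ : Fin n → Fin J, (∏ i, p (σ i)) = 1 := by
  classical
  have h := Finset.prod_univ_sum (κ := fun _ : Fin n => Fin J)
    (fun _ => (Finset.univ : Finset (Fin J))) (fun _ j => p j)
  rw [Fintype.piFinset_univ] at h
  rw [← h, hp_sum, Finset.prod_const_one]

lemma prod_update {n J : ℕ} (p : Fin J → ℝ) (σ : Fin n → Fin J) (t : Fin n) (j : Fin J) :
    (∏ i, p ((Function.update σ t j) i)) = p j * ∏ i ∈ Finset.univ.erase t, p (σ i) := by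
  classical
  rw [← Finset.mul_prod_erase Finset.univ (fun i => p (Function.update σ t j i)) (Finset.mem_univ t)]
  rw [Function.update_self]
  congr 1
  refine Finset.prod_congr rfl (fun i hi => ?_)
  rw [Function.update_of_ne (Finset.ne_of_mem_erase hi)]

lemma key_split {n J : ℕ} (p : Fin J → ℝ) (hp_sum : ∑ j, p j = 1)
    (t : Fin n) (F : (Fin n → Fin J) → Fin J → ℝ)
    (hF : ∀ σ j, F (Function.update σ t j) = F σ) :
    ∑ σ : Fin n → Fin J, (∏ i, p (σ i)) * F σ (σ t)
      = ∑ σ : Fin n → Fin J, (∏ i, p (σ i)) * ∑ j, p j * F σ j := by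
  classical
  have hinv : Function.Involutive (fun x : (Fin n → Fin J) × Fin J =>
      (Function.update x.1 t x.2, x.1 t)) := by
    rintro ⟨σ, j⟩
    simp
  have hperm := Equiv.sum_comp hinv.toPerm
    (fun x : (Fin n → Fin J) × Fin J => (∏ i, p (x.1 i)) * (p x.2 * F x.1 x.2))
  have hRHS : ∑ σ : Fin n → Fin J, (∏ i, p (σ i)) * ∑ j, p j * F σ j
      = ∑ x : (Fin n → Fin J) × Fin J, (∏ i, p (x.1 i)) * (p x.2 * F x.1 x.2) := by
    rw [Fintype.sum_prod_type]
    exact Finset.sum_congr rfl (fun σ _ => by rw [Finset.mul_sum])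
  have hterm : ∀ x : (Fin n → Fin J) × Fin J,
      (∏ i, p ((Function.update x.1 t x.2) i)) * (p (x.1 t) * F (Function.update x.1 t x.2) (x.1 t))
      = p x.2 * ((∏ i, p (x.1 i)) * F x.1 (x.1 t)) := by
    rintro ⟨σ, j⟩
    have h2 : (∏ i, p (σ i)) = p (σ t) * ∏ i ∈ Finset.univ.erase t, p (σ i) :=
      (Finset.mul_prod_erase _ _ (Finset.mem_univ t)).symm
    rw [prod_update, hF σ j, h2]; ring
  have hmain : ∑ x : (Fin n → Fin J) × Fin J, (∏ i, p (x.1 i)) * (p x.2 * F x.1 x.2)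
      = ∑ x : (Fin n → Fin J) × Fin J, p x.2 * ((∏ i, p (x.1 i)) * F x.1 (x.1 t)) := by
    rw [← hperm]
    refine Fintype.sum_congr _ _ (fun x => ?_)
    simpa using hterm x
  rw [hRHS, hmain, Fintype.sum_prod_type]
  have hone : ∀ σ : Fin n → Fin J, ∑ j, p j * ((∏ i, p (σ i)) * F σ (σ t))
      = (∏ i, p (σ i)) * F σ (σ t) := by
    intro σ
    rw [← Finset.sum_mul, hp_sum, one_mul]
  exact Finset.sum_congr rfl (fun σ _ => (hone σ).symm)

lemma marg {n J : ℕ} (p : Fin J → ℝ) (hp_sum : ∑ j, p j = 1)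
    (i : Fin n) (f : Fin J → ℝ) :
    ∑ σ : Fin n → Fin J, (∏ i', p (σ i')) * f (σ i) = ∑ j, p j * f j := by
  classical
  rw [key_split p hp_sum i (fun _ j => f j) (fun _ _ => rfl)]
  rw [← Finset.sum_mul, Wsum p hp_sum, one_mul]

end PDE


namespace PDE
open Real Finset

lemma Dslack_le {B : ℕ} {ε : ℝ} (hε : 0 < ε) : Dslack B ε ≤ (B:ℝ) * ε :=
  mul_le_mul_of_nonneg_left (one_sub_exp_neg_le hε) (Nat.cast_nonneg B)

lemma innerBound {B J n : ℕ} (hn : 1 ≤ n) (s : Fin J → ℕ) (hs1 : ∀ j, 1 ≤ s j)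
    (hs2 : ∀ j, s j < B) (p : Fin J → ℝ) (hp0 : ∀ j, 0 ≤ p j) (hp1 : ∑ j, p j = 1)
    {ε : ℝ} (hε : 0 < ε) (N : ℕ → ℕ) :
    ∑ j, p j * (mval B ε N (s j) - Phi B ε N)
      ≤ (1/(n:ℝ)) * (∑ σ' : Fin n → Fin J, (∏ i, p (σ' i)) * (optWaste B n (seqSizes n s σ') : ℝ))
        + Dslack B ε := by
  classical
  set W : (Fin n → Fin J) → ℝ := fun σ' => ∏ i, p (σ' i) with hW
  have hW0 : ∀ σ' : Fin n → Fin J, 0 ≤ W σ' :=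
    fun σ' => Finset.prod_nonneg (fun i _ => hp0 _)
  have hW1 : ∑ σ' : Fin n → Fin J, W σ' = 1 := Wsum p hp1
  set Q : Fin J → ℝ := fun j => mval B ε N (s j) + ((s j : ℕ):ℝ) - Phi B ε N with hQ
  set EOPT : ℝ := ∑ σ' : Fin n → Fin J, W σ' * (optWaste B n (seqSizes n s σ') : ℝ) with hEOPT
  set ES : ℝ := ∑ j, p j * ((s j : ℕ):ℝ) with hES
  have hnpos : (0:ℝ) < (n:ℝ) := by exact_mod_cast hn
  -- n * E_j Q = sum over i of marginal
  have hmarg : ∀ i : Fin n, ∑ σ' : Fin n → Fin J, W σ' * Q (σ' i) = ∑ j, p j * Q j :=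
    fun i => marg p hp1 i Q
  have hmargS : ∀ i : Fin n, ∑ σ' : Fin n → Fin J, W σ' * ((s (σ' i) : ℕ):ℝ) = ES :=
    fun i => marg p hp1 i (fun j => ((s j : ℕ):ℝ))
  have hsum1 : ∑ i : Fin n, ∑ σ' : Fin n → Fin J, W σ' * Q (σ' i)
      = (n:ℝ) * (∑ j, p j * Q j) := by
    rw [Finset.sum_congr rfl (fun i _ => hmarg i), Finset.sum_const, Finset.card_univ,
      Fintype.card_fin, nsmul_eq_mul]
  have hswap : ∑ i : Fin n, ∑ σ' : Fin n → Fin J, W σ' * Q (σ' i)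
      = ∑ σ' : Fin n → Fin J, W σ' * (∑ i : Fin n, Q (σ' i)) := by
    rw [Finset.sum_comm]
    exact Finset.sum_congr rfl (fun σ' _ => by rw [Finset.mul_sum])
  have hpack : ∀ σ' : Fin n → Fin J, ∑ i : Fin n, Q (σ' i)
      ≤ (optWaste B n (seqSizes n s σ') : ℝ) + (∑ i : Fin n, ((s (σ' i) : ℕ):ℝ))
        + (n:ℝ) * Dslack B ε := by
    intro σ'
    exact packBound hε s hs1 hs2 σ'
  have hb1 : ∑ σ' : Fin n → Fin J, W σ' * (∑ i : Fin n, Q (σ' i))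
      ≤ ∑ σ' : Fin n → Fin J, W σ' * ((optWaste B n (seqSizes n s σ') : ℝ)
          + (∑ i : Fin n, ((s (σ' i) : ℕ):ℝ)) + (n:ℝ) * Dslack B ε) :=
    Finset.sum_le_sum (fun σ' _ => mul_le_mul_of_nonneg_left (hpack σ') (hW0 σ'))
  have hb2 : ∑ σ' : Fin n → Fin J, W σ' * ((optWaste B n (seqSizes n s σ') : ℝ)
          + (∑ i : Fin n, ((s (σ' i) : ℕ):ℝ)) + (n:ℝ) * Dslack B ε)
      = EOPT + (∑ σ' : Fin n → Fin J, W σ' * (∑ i : Fin n, ((s (σ' i) : ℕ):ℝ)))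
        + (n:ℝ) * Dslack B ε := by
    simp only [mul_add, Finset.sum_add_distrib]
    rw [← Finset.sum_mul, hW1, one_mul]
  have hb3 : ∑ σ' : Fin n → Fin J, W σ' * (∑ i : Fin n, ((s (σ' i) : ℕ):ℝ))
      = (n:ℝ) * ES := by
    have e1 : ∀ σ' : Fin n → Fin J, W σ' * (∑ i : Fin n, ((s (σ' i) : ℕ):ℝ))
        = ∑ i : Fin n, W σ' * ((s (σ' i) : ℕ):ℝ) := fun σ' => Finset.mul_sum _ _ _
    rw [Finset.sum_congr rfl (fun σ' _ => e1 σ'), Finset.sum_comm,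
      Finset.sum_congr rfl (fun i _ => hmargS i), Finset.sum_const, Finset.card_univ,
      Fintype.card_fin, nsmul_eq_mul]
  set T : ℝ := ∑ j, p j * (mval B ε N (s j) - Phi B ε N) with hT
  have hQsplit : ∑ j, p j * Q j = T + ES := by
    rw [hT, hES, ← Finset.sum_add_distrib]
    refine Finset.sum_congr rfl (fun j _ => ?_)
    rw [hQ]; ring
  have hchain : (n:ℝ) * (∑ j, p j * Q j) ≤ EOPT + (n:ℝ) * ES + (n:ℝ) * Dslack B ε := by
    rw [← hsum1]
    rw [hswap]
    calc ∑ σ' : Fin n → Fin J, W σ' * (∑ i : Fin n, Q (σ' i))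
        ≤ ∑ σ' : Fin n → Fin J, W σ' * ((optWaste B n (seqSizes n s σ') : ℝ)
            + (∑ i : Fin n, ((s (σ' i) : ℕ):ℝ)) + (n:ℝ) * Dslack B ε) := hb1
      _ = EOPT + (∑ σ' : Fin n → Fin J, W σ' * (∑ i : Fin n, ((s (σ' i) : ℕ):ℝ)))
            + (n:ℝ) * Dslack B ε := hb2
      _ = EOPT + (n:ℝ) * ES + (n:ℝ) * Dslack B ε := by rw [hb3]
  have hfin : (n:ℝ) * T ≤ EOPT + (n:ℝ) * Dslack B ε := by
    have hexp : (n:ℝ) * (T + ES) = (n:ℝ)*T + (n:ℝ)*ES := by ring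
    rw [hQsplit, hexp] at hchain
    linarith
  have hinv : (0:ℝ) < 1/(n:ℝ) := by positivity
  have hmono := mul_le_mul_of_nonneg_left hfin hinv.le
  have e2 : (1/(n:ℝ))*((n:ℝ)*T) = T := by field_simp
  have e3 : (1/(n:ℝ))*(EOPT + (n:ℝ)*Dslack B ε) = (1/(n:ℝ))*EOPT + Dslack B ε := by
    field_simp
  rw [e2, e3] at hmono
  exact hmono

end PDE

/-- **Theorem 4 (open-ended PD-exp with time-varying `ε`).**
Items of integer sizes `0 < s 1 < ⋯ < s J < B` arrive i.i.d. with probabilities `p j`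
and are packed online into bins of integer capacity `B` by the PD-exp algorithm run
with the time-varying parameter `ε(t) = √(B/(2(B+t)))` for the `t`-th arrival
(`t = 1, 2, …`; below arrivals are `0`-indexed, so step `t` uses
`ε = √(B/(2(B+t+1)))`; the placement at step `t` may depend only on the items seen so
far, ties broken arbitrarily).  Then for every `n ≥ 1`,
`E[W^{PD-exp}(n)] ≤ E[W^{OPT}(n)] + √(8·B³·(n+B))`, where the expectation is over the
i.i.d. item sequence. -/
theorem pd_exp_varying_epsilon (B J n : ℕ) (hB : 1 ≤ B) (hJ : 1 ≤ J) (hn : 1 ≤ n)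
    (s : Fin J → ℕ) (hs_pos : ∀ j, 0 < s j) (hs_mono : StrictMono s)
    (hs_lt : ∀ j, s j < B)
    (p : Fin J → ℝ) (hp_nonneg : ∀ j, 0 ≤ p j) (hp_sum : ∑ j, p j = 1)
    (place : (Fin n → Fin J) → ℕ → ℕ)
    (hadapted : ∀ σ τ : Fin n → Fin J, ∀ t : ℕ,
      (∀ i : Fin n, (i : ℕ) ≤ t → σ i = τ i) → place σ t = place τ t)
    (hrun : ∀ σ : Fin n → Fin J, ∀ t < n,
      PDExpStep B (Real.sqrt ((B : ℝ) / (2 * ((B : ℝ) + (t : ℝ) + 1))))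
        (binState (seqSizes n s σ) (place σ) t) (seqSizes n s σ t) (place σ t)) :
    ∑ σ : Fin n → Fin J, (∏ i, p (σ i)) * algWaste B n (seqSizes n s σ) (place σ)
      ≤ (∑ σ : Fin n → Fin J, (∏ i, p (σ i)) * (optWaste B n (seqSizes n s σ) : ℝ))
        + Real.sqrt (8 * (B : ℝ) ^ 3 * ((n : ℝ) + (B : ℝ))) := by
  classical
  have hs1 : ∀ j, 1 ≤ s j := fun j => hs_pos j
  have hW0 : ∀ σ : Fin n → Fin J, 0 ≤ ∏ i, p (σ i) :=
    fun σ => Finset.prod_nonneg fun i _ => hp_nonneg _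
  have hW1 : ∑ σ : Fin n → Fin J, ∏ i, p (σ i) = 1 := PDE.Wsum p hp_sum
  set EOPT : ℝ := ∑ σ : Fin n → Fin J, (∏ i, p (σ i)) * (optWaste B n (seqSizes n s σ) : ℝ)
    with hEOPT
  set KK : ℝ := (B:ℝ) * ((B-1:ℕ):ℝ) * (1 / PDE.eps B (n-1)) with hKK
  set gterm : (Fin n → Fin J) → ℕ → ℝ := fun σ t =>
    PDE.mval B (PDE.eps B t) (binState (seqSizes n s σ) (place σ) t) (seqSizes n s σ t)
      - PDE.Phi B (PDE.eps B t) (binState (seqSizes n s σ) (place σ) t) with hgterm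
  have hpath : ∀ σ : Fin n → Fin J, algWaste B n (seqSizes n s σ) (place σ)
      ≤ KK + ∑ t ∈ Finset.range n, gterm σ t :=
    fun σ => PDE.pathBound hs1 hs_lt hrun hB hn σ
  have step1 : ∑ σ : Fin n → Fin J, (∏ i, p (σ i)) * algWaste B n (seqSizes n s σ) (place σ)
      ≤ ∑ σ : Fin n → Fin J, (∏ i, p (σ i)) * (KK + ∑ t ∈ Finset.range n, gterm σ t) :=
    Finset.sum_le_sum (fun σ _ => mul_le_mul_of_nonneg_left (hpath σ) (hW0 σ))
  have step2 : ∑ σ : Fin n → Fin J, (∏ i, p (σ i)) * (KK + ∑ t ∈ Finset.range n, gterm σ t)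
      = KK + ∑ t ∈ Finset.range n, ∑ σ : Fin n → Fin J, (∏ i, p (σ i)) * gterm σ t := by
    simp only [mul_add, Finset.sum_add_distrib]
    rw [← Finset.sum_mul, hW1, one_mul]
    congr 1
    rw [Finset.sum_comm]
    exact Finset.sum_congr rfl (fun σ _ => by rw [Finset.mul_sum])
  have step4 : ∀ t ∈ Finset.range n,
      ∑ σ : Fin n → Fin J, (∏ i, p (σ i)) * gterm σ t
        ≤ (1/(n:ℝ)) * EOPT + PDE.Dslack B (PDE.eps B t) := by
    intro t htm
    have ht : t < n := Finset.mem_range.1 htm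
    set tF : Fin n := ⟨t, ht⟩ with htF
    set F : (Fin n → Fin J) → Fin J → ℝ := fun σ j =>
      PDE.mval B (PDE.eps B t) (binState (seqSizes n s σ) (place σ) t) (s j)
        - PDE.Phi B (PDE.eps B t) (binState (seqSizes n s σ) (place σ) t) with hF
    have hFinv : ∀ (σ : Fin n → Fin J) (j : Fin J), F (Function.update σ tF j) = F σ := by
      intro σ j
      have hstate : binState (seqSizes n s (Function.update σ tF j))
            (place (Function.update σ tF j)) t
          = binState (seqSizes n s σ) (place σ) t := by
        refine PDE.state_congr hadapted _ _ t (fun i hi => ?_)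
        have hne : i ≠ tF := by
          intro he
          rw [he] at hi
          simp only [htF] at hi
          omega
        exact Function.update_of_ne hne j σ
      rw [hF]
      simp only [hstate]
    have hterm : ∀ σ : Fin n → Fin J, gterm σ t = F σ (σ tF) := by
      intro σ
      rw [hgterm, hF]
      simp only
      rw [PDE.seqSizes_lt ht σ]
    rw [Finset.sum_congr rfl (fun σ _ => by rw [hterm σ])]
    rw [PDE.key_split p hp_sum tF F hFinv]
    have hinner : ∀ σ : Fin n → Fin J, ∑ j, p j * F σ j
        ≤ (1/(n:ℝ)) * EOPT + PDE.Dslack B (PDE.eps B t) := by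
      intro σ
      rw [hF]
      exact PDE.innerBound hn s hs1 hs_lt p hp_nonneg hp_sum (PDE.eps_pos hB t)
        (binState (seqSizes n s σ) (place σ) t)
    calc ∑ σ : Fin n → Fin J, (∏ i, p (σ i)) * ∑ j, p j * F σ j
        ≤ ∑ σ : Fin n → Fin J, (∏ i, p (σ i))
            * ((1/(n:ℝ)) * EOPT + PDE.Dslack B (PDE.eps B t)) :=
          Finset.sum_le_sum (fun σ _ => mul_le_mul_of_nonneg_left (hinner σ) (hW0 σ))
      _ = (1/(n:ℝ)) * EOPT + PDE.Dslack B (PDE.eps B t) := by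
          rw [← Finset.sum_mul, hW1, one_mul]
  have step5 : ∑ t ∈ Finset.range n,
      ((1/(n:ℝ)) * EOPT + PDE.Dslack B (PDE.eps B t))
      = EOPT + ∑ t ∈ Finset.range n, PDE.Dslack B (PDE.eps B t) := by
    rw [Finset.sum_add_distrib, Finset.sum_const, Finset.card_range, nsmul_eq_mul]
    have hnpos : (0:ℝ) < (n:ℝ) := by exact_mod_cast hn
    have : (n:ℝ) * ((1/(n:ℝ)) * EOPT) = EOPT := by field_simp
    rw [this]
  have step6 : ∑ t ∈ Finset.range n, PDE.Dslack B (PDE.eps B t)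
      ≤ ∑ t ∈ Finset.range n, (B:ℝ) * PDE.eps B t :=
    Finset.sum_le_sum (fun t _ => PDE.Dslack_le (PDE.eps_pos hB t))
  have harith := PDE.final_arith B n hB hn
  calc ∑ σ : Fin n → Fin J, (∏ i, p (σ i)) * algWaste B n (seqSizes n s σ) (place σ)
      ≤ ∑ σ : Fin n → Fin J, (∏ i, p (σ i)) * (KK + ∑ t ∈ Finset.range n, gterm σ t) := step1
    _ = KK + ∑ t ∈ Finset.range n, ∑ σ : Fin n → Fin J, (∏ i, p (σ i)) * gterm σ t := step2
    _ ≤ KK + ∑ t ∈ Finset.range n, ((1/(n:ℝ)) * EOPT + PDE.Dslack B (PDE.eps B t)) := by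
        have := Finset.sum_le_sum step4
        linarith
    _ = KK + (EOPT + ∑ t ∈ Finset.range n, PDE.Dslack B (PDE.eps B t)) := by rw [step5]
    _ ≤ EOPT + (KK + ∑ t ∈ Finset.range n, (B:ℝ) * PDE.eps B t) := by linarith
    _ ≤ EOPT + Real.sqrt (8 * (B:ℝ)^3 * ((n:ℝ) + (B:ℝ))) := by
        rw [hKK]
        linarith [harith]
end

section
/- Under the PD-quad algorithm run with a constant parameter ε(t) = ε ∈ (0,1], deterministically for every arrival sequence, every time t ≥ 0, and every level h ∈ {1,…,B−1}, the number of bins of level h satisfies N_h(t) ≤ (B+1)·h/ε. -/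
lemma binState_zero (sz place : ℕ → ℕ) (hsz : ∀ t, 1 ≤ sz t) :
    ∀ t, binState sz place t 0 = 0 := by
  intro t
  induction t with
  | zero => rfl
  | succ t ih =>
    show binUpdate (binState sz place t) (place t) (sz t) 0 = 0
    unfold binUpdate
    have hs := hsz t
    rw [if_neg (by omega : ¬ (0 = place t ∧ 1 ≤ place t)),
      if_neg (by omega : ¬ 0 = place t + sz t), ih]

lemma key_step (B : ℕ) (ε : ℝ) (hε0 : 0 < ε) (N : ℕ → ℕ)
    (s h0 : ℕ) (hs1 : 1 ≤ s) (hsB : s < B)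
    (hh1 : 1 ≤ h0 + s) (hh2 : h0 + s ≤ B - 1)
    (hstep : PDQuadStep B ε N s h0) :
    ε * (N (h0 + s) : ℝ) ≤ B + ε * (N h0 : ℝ) := by
  have hmem : h0 + s ∈ Finset.Icc 1 (B-1) := Finset.mem_Icc.mpr ⟨hh1, hh2⟩
  -- pointwise lower bound for the sum in quadObj at h0
  have hf : ∀ h' ∈ Finset.Icc 1 (B-1),
      (N h' : ℝ)^2 + (if h' = h0 + s then 2*(N (h0+s):ℝ)+1 else 0)
        - (if h' = h0 then 2*(N h':ℝ) else 0)
      ≤ ((binUpdate N h0 s h' : ℕ) : ℝ)^2 := by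
    intro h' hm'
    rw [Finset.mem_Icc] at hm'
    by_cases e1 : h' = h0 + s
    · rw [if_pos e1, if_neg (show ¬ h' = h0 by omega)]
      have hv : binUpdate N h0 s h' = N h' + 1 := by
        unfold binUpdate
        rw [if_pos e1, if_neg (show ¬ (h' = h0 ∧ 1 ≤ h0) by omega)]
      rw [hv, e1]
      push_cast
      nlinarith [sq_nonneg ((N (h0+s) : ℕ) : ℝ)]
    · by_cases e2 : h' = h0
      · rw [if_neg e1, if_pos e2]
        have hv : binUpdate N h0 s h' = N h' - 1 := by
          unfold binUpdate
          rw [if_pos (show h' = h0 ∧ 1 ≤ h0 by omega), if_neg e1]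
          omega
        rw [hv]
        rcases Nat.eq_zero_or_pos (N h') with h0' | hp
        · simp [h0']
        · rw [Nat.cast_sub hp]
          push_cast
          nlinarith
      · rw [if_neg e1, if_neg e2]
        have hv : binUpdate N h0 s h' = N h' := by
          unfold binUpdate
          rw [if_neg (show ¬ (h' = h0 ∧ 1 ≤ h0) by omega), if_neg e1]
          omega
        rw [hv]
        simp
  have hsumA := Finset.sum_le_sum hf
  have hsplit : (∑ h' ∈ Finset.Icc 1 (B-1),
      ((N h' : ℝ)^2 + (if h' = h0 + s then 2*(N (h0+s):ℝ)+1 else 0)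
        - (if h' = h0 then 2*(N h':ℝ) else 0)))
      = (∑ h' ∈ Finset.Icc 1 (B-1), (N h' : ℝ)^2) + (2*(N (h0+s):ℝ)+1)
        - (if h0 ∈ Finset.Icc 1 (B-1) then 2*(N h0:ℝ) else 0) := by
    rw [Finset.sum_sub_distrib, Finset.sum_add_distrib,
      Finset.sum_ite_eq' (Finset.Icc 1 (B-1)) (h0+s) (fun _ => 2*(N (h0+s):ℝ)+1),
      Finset.sum_ite_eq' (Finset.Icc 1 (B-1)) h0 (fun h' => 2*(N h':ℝ)),
      if_pos hmem]
  have hcorr : (if h0 ∈ Finset.Icc 1 (B-1) then 2*(N h0:ℝ) else 0) ≤ 2*(N h0:ℝ) := by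
    split
    · exact le_refl _
    · positivity
  have hsumf : (∑ h' ∈ Finset.Icc 1 (B-1), (N h' : ℝ)^2) + 2*(N (h0+s):ℝ) + 1 - 2*(N h0:ℝ)
      ≤ ∑ h' ∈ Finset.Icc 1 (B-1), ((binUpdate N h0 s h' : ℕ) : ℝ)^2 := by
    rw [hsplit] at hsumA
    linarith
  -- pointwise upper bound for the sum in quadObj at B - s
  have hg : ∀ h' ∈ Finset.Icc 1 (B-1),
      ((binUpdate N (B-s) s h' : ℕ) : ℝ)^2 ≤ (N h' : ℝ)^2 := by
    intro h' hm'
    rw [Finset.mem_Icc] at hm'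
    have hle : binUpdate N (B-s) s h' ≤ N h' := by
      unfold binUpdate
      have hBs : (B - s) + s = B := Nat.sub_add_cancel hsB.le
      rw [if_neg (by omega : ¬ h' = (B - s) + s), add_zero]
      split
      · omega
      · exact le_refl _
    exact_mod_cast Nat.pow_le_pow_left hle 2
  have hsumg := Finset.sum_le_sum hg
  have hmin := hstep.2 (B - s) le_rfl
  unfold quadObj at hmin
  rw [if_pos rfl] at hmin
  have hind : (0:ℝ) ≤ (B:ℝ) * (if h0 = B - s then 1 else 0) := by
    split
    · norm_num
    · simp
  have h1 : ε/2 * ((∑ h' ∈ Finset.Icc 1 (B-1), (N h' : ℝ)^2)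
        + 2*(N (h0+s):ℝ) + 1 - 2*(N h0:ℝ))
      ≤ ε/2 * ∑ h' ∈ Finset.Icc 1 (B-1), ((binUpdate N h0 s h' : ℕ) : ℝ)^2 :=
    mul_le_mul_of_nonneg_left hsumf (by positivity)
  have h2 : ε/2 * (∑ h' ∈ Finset.Icc 1 (B-1), ((binUpdate N (B-s) s h' : ℕ) : ℝ)^2)
      ≤ ε/2 * ∑ h' ∈ Finset.Icc 1 (B-1), (N h' : ℝ)^2 :=
    mul_le_mul_of_nonneg_left hsumg (by positivity)
  nlinarith [h1, h2, hmin, hind]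

/-- **Deterministic level-count invariant for PD-quad with constant `ε`.**
Items of integer sizes drawn from `{s 1, …, s J}` (with `0 < s 1 < ⋯ < s J < B`)
arrive one at a time and are packed by the PD-quad algorithm run with a constant
parameter `ε ∈ (0, 1]` (ties broken arbitrarily).  Then deterministically, for every
arrival sequence, every time `t ≥ 0`, and every level `h ∈ {1, …, B−1}`, the number of
bins of level `h` satisfies `N_h(t) ≤ (B+1)·h/ε`. -/
theorem pd_quad_level_count_invariant (B J : ℕ) (hB : 1 ≤ B) (hJ : 1 ≤ J)
    (s : Fin J → ℕ) (hs_pos : ∀ j, 0 < s j) (hs_mono : StrictMono s)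
    (hs_lt : ∀ j, s j < B)
    (ε : ℝ) (hε0 : 0 < ε) (hε1 : ε ≤ 1)
    (sz : ℕ → ℕ) (hsz : ∀ t, ∃ j, sz t = s j)
    (place : ℕ → ℕ)
    (hrun : ∀ t, PDQuadStep B ε (binState sz place t) (sz t) (place t)) :
    ∀ t : ℕ, ∀ h : ℕ, 1 ≤ h → h ≤ B - 1 →
      (binState sz place t h : ℝ) ≤ ((B : ℝ) + 1) * (h : ℝ) / ε := by
  have hsz1 : ∀ t, 1 ≤ sz t := fun t => by
    obtain ⟨j, hj⟩ := hsz t; rw [hj]; exact hs_pos j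
  have hszB : ∀ t, sz t < B := fun t => by
    obtain ⟨j, hj⟩ := hsz t; rw [hj]; exact hs_lt j
  have hN0 : ∀ t, binState sz place t 0 = 0 := binState_zero sz place hsz1
  suffices H : ∀ h, 1 ≤ h → h ≤ B - 1 → ∀ t,
      (binState sz place t h : ℝ) ≤ ((B : ℝ) + 1) * (h : ℝ) / ε by
    intro t h h1 h2; exact H h h1 h2 t
  intro h
  induction h using Nat.strong_induction_on with
  | _ h IH =>
    intro hh1 hh2 t
    induction t with
    | zero =>
      show ((0:ℕ):ℝ) ≤ _
      rw [Nat.cast_zero]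
      positivity
    | succ t iht =>
      by_cases hc : h = place t + sz t
      · -- level h gains a bin
        have hkey := key_step B ε hε0 (binState sz place t) (sz t) (place t)
          (hsz1 t) (hszB t) (by omega) (by rw [← hc]; omega) (hrun t)
        rw [← hc] at hkey
        have hval : binState sz place (t+1) h = binState sz place t h + 1 := by
          show binUpdate (binState sz place t) (place t) (sz t) h = _
          unfold binUpdate
          have hne : ¬ (h = place t ∧ 1 ≤ place t) := by
            intro hcon; have := hsz1 t; omega
          rw [if_neg hne, if_pos hc]
        have hIH0 : ε * ((binState sz place t (place t) : ℕ) : ℝ)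
            ≤ ((B:ℝ)+1) * (place t : ℝ) := by
          rcases Nat.eq_zero_or_pos (place t) with hp0 | hp1
          · rw [hp0, hN0 t]; simp
          · have hplt : place t < h := by have := hsz1 t; omega
            have hb := IH (place t) hplt hp1 (by omega) t
            rw [le_div_iff₀ hε0] at hb
            nlinarith
        have hh1' : (1:ℝ) ≤ (h:ℝ) := by exact_mod_cast hh1
        have hp_le : ((place t : ℕ):ℝ) + 1 ≤ (h:ℝ) := by
          have : place t + 1 ≤ h := by have := hsz1 t; omega
          exact_mod_cast this
        rw [hval, le_div_iff₀ hε0]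
        push_cast
        have hB0 : (0:ℝ) ≤ (B:ℝ) + 1 := by positivity
        have hmul : ((B:ℝ)+1) * ((place t : ℕ):ℝ) ≤ ((B:ℝ)+1) * ((h:ℝ) - 1) :=
          mul_le_mul_of_nonneg_left (by linarith) hB0
        nlinarith [hkey, hIH0, hmul, hh1', hε1, hε0.le]
      · -- level h does not gain a bin
        have hle : binState sz place (t+1) h ≤ binState sz place t h := by
          show binUpdate (binState sz place t) (place t) (sz t) h ≤ _
          unfold binUpdate
          rw [if_neg hc, add_zero]
          split
          · omega
          · exact le_refl _
        exact le_trans (by exact_mod_cast hle) iht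
end

section
/- Let B ≥ 1 be an integer and let N : {1,…,B−1} → ℕ be arbitrary (extend N by N(h) = 0 for h ≥ B). Let y_1',…,y_m' be a nonempty list of positive integers with Σ_{i=1}^m y_i' ≤ B. Then there exist a permutation y_1,…,y_m of the list and an index 0 ≤ last ≤ m such that, setting S_i = Σ_{j=1}^{i} y_j (S_0 = 0): (i) N(S_i) > 0 for every 1 ≤ i ≤ last, and (ii) N(S_last + y_i) = 0 for every i with last < i ≤ m. -/
private lemma aux_greedy (N : ℕ → ℕ) :
    ∀ n (l : List ℕ), l.length ≤ n → ∀ S : ℕ,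
      ∃ l' : List ℕ, l'.Perm l ∧ ∃ last ≤ l'.length,
        (∀ i, 1 ≤ i → i ≤ last → 0 < N (S + (l'.take i).sum)) ∧
        (∀ i, last ≤ i → i < l'.length →
          N (S + (l'.take last).sum + l'.getD i 0) = 0) := by
  intro n
  induction n with
  | zero =>
    intro l hl S
    have : l = [] := List.length_eq_zero_iff.mp (Nat.le_zero.mp hl)
    subst this
    exact ⟨[], List.Perm.refl _, 0, le_refl _, by intro i h1 h2; omega, by simp⟩
  | succ n ih =>
    intro l hl S
    by_cases h : ∃ y ∈ l, 0 < N (S + y)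
    · obtain ⟨y, hyl, hy⟩ := h
      have hlen : (l.erase y).length ≤ n := by
        have := List.length_erase_of_mem hyl
        omega
      obtain ⟨l'', hperm, last', hle, h1, h2⟩ := ih (l.erase y) hlen (S + y)
      refine ⟨y :: l'', ?_, last' + 1, by simpa using Nat.succ_le_succ hle, ?_, ?_⟩
      · exact (hperm.cons y).trans (List.perm_cons_erase hyl).symm
      · intro i hi1 hile
        obtain ⟨i', rfl⟩ := Nat.exists_eq_add_of_le hi1
        rcases Nat.eq_zero_or_pos i' with rfl | hi'
        · simpa using hy
        · have := h1 i' hi' (by omega)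
          simpa [List.take_cons, Nat.add_comm 1 i', Nat.add_assoc] using this
      · intro i hi hilen
        obtain ⟨i', rfl⟩ := Nat.exists_eq_add_of_le (show 1 ≤ i by omega)
        have := h2 i' (by omega) (by simp at hilen; omega)
        simpa [List.take_cons, Nat.add_comm 1 i', Nat.add_assoc] using this
    · push_neg at h
      refine ⟨l, List.Perm.refl _, 0, Nat.zero_le _, by omega, ?_⟩
      intro i _ hilen
      have hmem : l.getD i 0 ∈ l := by
        rw [List.getD_eq_getElem l 0 hilen]
        exact List.getElem_mem _
      have := h _ hmem
      simpa using Nat.le_zero.mp this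

/-- **Ordering-and-threshold existence (reference policy `A_F` of Csirik et al.).**
Let `B ≥ 1` and let `N : ℕ → ℕ` give the number of partially filled bins of each level,
with `N h = 0` for `h ≥ B`.  Let `l` be a nonempty list of positive integers (the items
of one bin of an optimal packing) with `l.sum ≤ B`.  Then there is a permutation `l'` of
`l` (with `1`-based entries `y_1, …, y_m` and partial sums `S_i = y_1 + ⋯ + y_i`) and a
threshold `0 ≤ last ≤ m` such that `N (S_i) > 0` for all `1 ≤ i ≤ last`, and
`N (S_last + y_i) = 0` for all `last < i ≤ m` (stated below with `0`-based indices,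
`y_i = l'.getD (i-1) 0`). -/
theorem ordering_threshold_exists (B : ℕ) (hB : 1 ≤ B) (N : ℕ → ℕ)
    (hN : ∀ h, B ≤ h → N h = 0) (l : List ℕ) (hl : l ≠ [])
    (hpos : ∀ y ∈ l, 0 < y) (hsum : l.sum ≤ B) :
    ∃ l' : List ℕ, l'.Perm l ∧ ∃ last ≤ l'.length,
      (∀ i, 1 ≤ i → i ≤ last → 0 < N ((l'.take i).sum)) ∧
      (∀ i, last ≤ i → i < l'.length → N ((l'.take last).sum + l'.getD i 0) = 0) := by
  obtain ⟨l', hperm, last, hle, h1, h2⟩ := aux_greedy N l.length l le_rfl 0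
  exact ⟨l', hperm, last, hle, fun i a b => by simpa using h1 i a b,
    fun i a b => by simpa using h2 i a b⟩
end

section
/- Let k > 0 and a > 0 be reals, let B ≥ 1 and n ≥ 1 be integers, set ε(t) = k/√(t+a) for integer t ≥ 1, and let n_h : {0,1,…,n} → ℕ be arbitrary for each h ∈ {1,…,B−1}. Then Σ_{h=1}^{B−1} Σ_{t=1}^{n} (1/ε(t))·(e^{−ε(t)·n_h(t)} − e^{−ε(t)·n_h(t−1)}) ≥ −(B−1)·√(a+n)/k. -/
lemma exp_compare (p q x : ℝ) (hq : 0 < q) (hqp : q ≤ p) (hx : 0 ≤ x) :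
    q * Real.exp (-p*x) - p * Real.exp (-q*x) ≥ q - p := by
  have hp : 0 < p := lt_of_lt_of_le hq hqp
  have hmono : MonotoneOn (fun y => q * Real.exp (-p*y) - p * Real.exp (-q*y)) (Set.Ici 0) := by
    apply monotoneOn_of_deriv_nonneg (convex_Ici 0)
    · fun_prop
    · intro y _
      apply DifferentiableAt.differentiableWithinAt
      fun_prop
    · intro y hy
      rw [interior_Ici] at hy
      have h1 : HasDerivAt (fun y => Real.exp (-p*y)) (Real.exp (-p*y) * (-p)) y := by
        simpa [Function.comp_def] using (Real.hasDerivAt_exp (-p*y)).comp y ((hasDerivAt_id y).const_mul (-p))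
      have h2 : HasDerivAt (fun y => Real.exp (-q*y)) (Real.exp (-q*y) * (-q)) y := by
        simpa [Function.comp_def] using (Real.hasDerivAt_exp (-q*y)).comp y ((hasDerivAt_id y).const_mul (-q))
      have h3 : HasDerivAt (fun y => q * Real.exp (-p*y) - p * Real.exp (-q*y))
          (q * (Real.exp (-p*y) * (-p)) - p * (Real.exp (-q*y) * (-q))) y :=
        (h1.const_mul q).sub (h2.const_mul p)
      rw [h3.deriv]
      have hexp : Real.exp (-p*y) ≤ Real.exp (-q*y) := by
        apply Real.exp_le_exp.mpr
        nlinarith [(Set.mem_Ioi.mp hy).le]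
      nlinarith [mul_nonneg (mul_nonneg hp.le hq.le) (sub_nonneg.mpr hexp)]
  have := hmono Set.self_mem_Ici (Set.mem_Ici.mpr hx) hx
  simpa using this

lemma exp_key (p q x : ℝ) (hq : 0 < q) (hqp : q ≤ p) (hx : 0 ≤ x) :
    (1/p) * Real.exp (-p*x) - (1/q) * Real.exp (-q*x) ≥ 1/p - 1/q := by
  have hp : 0 < p := lt_of_lt_of_le hq hqp
  have h := exp_compare p q x hq hqp hx
  have heq : (1/p) * Real.exp (-p*x) - (1/q) * Real.exp (-q*x) - (1/p - 1/q)
      = (q * Real.exp (-p*x) - p * Real.exp (-q*x) - (q - p)) / (p*q) := by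
    field_simp
  have hnn : 0 ≤ (q * Real.exp (-p*x) - p * Real.exp (-q*x) - (q - p)) / (p*q) :=
    div_nonneg (by linarith) (by positivity)
  linarith [heq ▸ hnn]

lemma inner_bound (k a : ℝ) (hk : 0 < k) (ha : 0 < a) (x : ℕ → ℕ) :
    ∀ n : ℕ, 1 ≤ n → ∑ t ∈ Finset.Icc 1 n,
        (1 / (k / Real.sqrt ((t : ℝ) + a))) *
          (Real.exp (-(k / Real.sqrt ((t : ℝ) + a)) * (x t : ℝ)) -
            Real.exp (-(k / Real.sqrt ((t : ℝ) + a)) * (x (t - 1) : ℝ)))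
      ≥ (1 / (k / Real.sqrt ((n:ℝ) + a))) *
          Real.exp (-(k / Real.sqrt ((n:ℝ) + a)) * (x n : ℝ))
          - Real.sqrt ((n:ℝ) + a) / k := by
  have hs : ∀ t : ℕ, 0 < Real.sqrt ((t:ℝ) + a) := fun t =>
    Real.sqrt_pos.mpr (by positivity)
  have hε : ∀ t : ℕ, 0 < k / Real.sqrt ((t:ℝ) + a) := fun t =>
    div_pos hk (hs t)
  have hεinv : ∀ t : ℕ, 1 / (k / Real.sqrt ((t:ℝ) + a)) = Real.sqrt ((t:ℝ) + a) / k :=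
    fun t => one_div_div k _
  intro n hn
  induction n, hn using Nat.le_induction with
  | base =>
    rw [Finset.Icc_self, Finset.sum_singleton]
    have hε1 : 0 < k / Real.sqrt ((1:ℝ) + a) :=
      div_pos hk (Real.sqrt_pos.mpr (by linarith))
    have h1 : Real.exp (-(k / Real.sqrt ((1:ℝ) + a)) * (x 0 : ℝ)) ≤ 1 := by
      rw [Real.exp_le_one_iff]
      have hx0 : (0:ℝ) ≤ (x 0 : ℝ) := Nat.cast_nonneg _
      nlinarith
    have e1 : 1 / (k / Real.sqrt ((1:ℝ) + a)) = Real.sqrt ((1:ℝ) + a) / k :=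
      one_div_div k _
    have hmul : (1 / (k / Real.sqrt ((1:ℝ) + a))) *
        Real.exp (-(k / Real.sqrt ((1:ℝ) + a)) * (x 0 : ℝ)) ≤ 1 / (k / Real.sqrt ((1:ℝ) + a)) :=
      mul_le_of_le_one_right (one_div_pos.mpr hε1).le h1
    simp only [Nat.sub_self]
    push_cast
    linarith [hmul, e1]
  | succ m hm ih =>
    rw [Finset.sum_Icc_succ_top (by omega : 1 ≤ m + 1)]
    have hmono : k / Real.sqrt (((m+1:ℕ):ℝ) + a) ≤ k / Real.sqrt ((m:ℝ) + a) := by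
      apply div_le_div_of_nonneg_left hk.le (hs m)
      apply Real.sqrt_le_sqrt
      push_cast
      linarith
    have hkey := exp_key (k / Real.sqrt ((m:ℝ) + a)) (k / Real.sqrt (((m+1:ℕ):ℝ) + a))
      (x m : ℝ) (hε (m+1)) hmono (Nat.cast_nonneg _)
    -- the (m+1)-th term has x ((m+1)-1) = x m
    have hsub : (m + 1) - 1 = m := by omega
    rw [hsub]
    have e1 := hεinv m
    have e2 := hεinv (m+1)
    push_cast at hkey e1 e2 ih ⊢
    linarith [ih, hkey]

/-- **Lower bound on the accumulated potential change for open-ended PD-exp.**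
Let `k > 0` and `a > 0` be reals, `B ≥ 1` and `n ≥ 1` integers, and set
`ε t = k / √(t+a)`.  For arbitrary level counts `nh h t : ℕ` (number of bins of level
`h` after `t` items),
`∑_{h=1}^{B−1} ∑_{t=1}^{n} (1/ε t)·(e^{−ε t · nh h t} − e^{−ε t · nh h (t−1)})
  ≥ −(B−1)·√(a+n)/k`. -/
theorem pd_exp_potential_telescoping_bound (k a : ℝ) (hk : 0 < k) (ha : 0 < a)
    (B n : ℕ) (hB : 1 ≤ B) (hn : 1 ≤ n) (nh : ℕ → ℕ → ℕ) :
    ∑ h ∈ Finset.Icc 1 (B - 1), ∑ t ∈ Finset.Icc 1 n,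
        (1 / (k / Real.sqrt ((t : ℝ) + a))) *
          (Real.exp (-(k / Real.sqrt ((t : ℝ) + a)) * (nh h t : ℝ)) -
            Real.exp (-(k / Real.sqrt ((t : ℝ) + a)) * (nh h (t - 1) : ℝ)))
      ≥ -((B : ℝ) - 1) * Real.sqrt (a + (n : ℝ)) / k := by
  have hs : 0 < Real.sqrt ((n:ℝ) + a) := Real.sqrt_pos.mpr (by positivity)
  have hbound : ∀ h ∈ Finset.Icc 1 (B-1),
      -(Real.sqrt ((n:ℝ) + a) / k) ≤ ∑ t ∈ Finset.Icc 1 n,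
        (1 / (k / Real.sqrt ((t : ℝ) + a))) *
          (Real.exp (-(k / Real.sqrt ((t : ℝ) + a)) * (nh h t : ℝ)) -
            Real.exp (-(k / Real.sqrt ((t : ℝ) + a)) * (nh h (t - 1) : ℝ))) := by
    intro h _
    have := inner_bound k a hk ha (nh h) n hn
    have hpos : 0 ≤ (1 / (k / Real.sqrt ((n:ℝ) + a))) *
        Real.exp (-(k / Real.sqrt ((n:ℝ) + a)) * (nh h n : ℝ)) := by positivity
    linarith
  have hsum := Finset.sum_le_sum hbound
  rw [Finset.sum_const, nsmul_eq_mul] at hsum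
  have hcard : ((B - 1 + 1 - 1 : ℕ) : ℝ) = (B:ℝ) - 1 := by
    have : B - 1 + 1 - 1 = B - 1 := by omega
    rw [this, Nat.cast_sub hB]
    norm_num
  rw [Nat.card_Icc] at hsum
  rw [hcard] at hsum
  have hcomm : Real.sqrt (a + (n:ℝ)) = Real.sqrt ((n:ℝ) + a) := by ring_nf
  rw [hcomm]
  calc ∑ h ∈ Finset.Icc 1 (B - 1), _ ≥ ((B:ℝ) - 1) * -(Real.sqrt ((n:ℝ) + a) / k) := hsum
    _ = -((B : ℝ) - 1) * Real.sqrt ((n:ℝ) + a) / k := by ring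
end
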